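/- arXiv:math/0511576 — 6 statements merged into one kernel-verified Lean document; each statement's English description precedes it below -/
import Mathlib

section
/- In a topological vector space V, every connected and locally convex subset X is polygonally connected, i.e., any two points of X can be joined by a finite union of straight line segments lying entirely in X. -/
/-- Appending one segment to a polygonal path. -/
lemma poly_snoc {V : Type*} [AddCommGroup V] [Module ℝ V] {X : Set V} {x z w : V}
    (h : ∃ n : ℕ, ∃ p : Fin (n + 1) → V, p 0 = x ∧ p (Fin.last n) = z ∧
      ∀ i : Fin n, segment ℝ (p i.castSucc) (p i.succ) ⊆ X)
    (hseg : segment ℝ z w ⊆ X) :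
    ∃ n : ℕ, ∃ p : Fin (n + 1) → V, p 0 = x ∧ p (Fin.last n) = w ∧
      ∀ i : Fin n, segment ℝ (p i.castSucc) (p i.succ) ⊆ X := by
  obtain ⟨n, p, h0, hl, hs⟩ := h
  refine ⟨n + 1, Fin.snoc p w, ?_, ?_, ?_⟩
  · have : ((0 : Fin (n + 2))) = (0 : Fin (n + 1)).castSucc := rfl
    rw [this, Fin.snoc_castSucc, h0]
  · simp [Fin.snoc_last]
  · intro i
    refine Fin.lastCases ?_ ?_ i
    · rw [Fin.succ_last, Fin.snoc_castSucc, Fin.snoc_last, hl]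
      exact hseg
    · intro j
      have h1 : (j.castSucc).succ = (j.succ).castSucc := (Fin.succ_castSucc j).symm
      rw [h1, Fin.snoc_castSucc, Fin.snoc_castSucc]
      exact hs j

/-- In a topological vector space `V`, every connected and locally convex subset `X`
is polygonally connected: any two points of `X` are joined by a finite union of
straight line segments lying entirely in `X`. -/
theorem stmt_0 {V : Type*} [TopologicalSpace V] [AddCommGroup V] [Module ℝ V]
    [IsTopologicalAddGroup V] [ContinuousSMul ℝ V]
    {X : Set V} (hconn : IsPreconnected X)
    (hlc : ∀ y ∈ X, ∃ N ∈ nhds y, Convex ℝ (N ∩ X))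
    {x y : V} (hx : x ∈ X) (hy : y ∈ X) :
    ∃ (n : ℕ) (p : Fin (n + 1) → V), p 0 = x ∧ p (Fin.last n) = y ∧
      ∀ i : Fin n, segment ℝ (p i.castSucc) (p i.succ) ⊆ X := by
  classical
  set P : V → Prop := fun z => ∃ n : ℕ, ∃ p : Fin (n + 1) → V, p 0 = x ∧ p (Fin.last n) = z ∧
      ∀ i : Fin n, segment ℝ (p i.castSucc) (p i.succ) ⊆ X with hPdef
  have hPx : P x := ⟨0, fun _ => x, rfl, rfl, fun i => i.elim0⟩
  -- choose convex neighborhoods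
  choose N hN hNconv using hlc
  -- key: if z ∈ X, a ∈ interior (N z _) ∩ X, then segment z a ⊆ X and segment a z ⊆ X
  have hsegm : ∀ z (hz : z ∈ X), ∀ a ∈ interior (N z hz) ∩ X, segment ℝ z a ⊆ X ∧
      segment ℝ a z ⊆ X := by
    intro z hz a ⟨ha1, ha2⟩
    have hzN : z ∈ N z hz ∩ X := ⟨mem_of_mem_nhds (hN z hz), hz⟩
    have haN : a ∈ N z hz ∩ X := ⟨interior_subset ha1, ha2⟩
    constructor
    · exact fun w hw => ((hNconv z hz).segment_subset hzN haN hw).2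
    · exact fun w hw => ((hNconv z hz).segment_subset haN hzN hw).2
  set U : Set V := ⋃ (z : V) (hz : z ∈ X) (_ : P z), interior (N z hz) with hU
  set W : Set V := ⋃ (z : V) (hz : z ∈ X) (_ : ¬ P z), interior (N z hz) with hW
  have hUopen : IsOpen U := isOpen_iUnion fun z => isOpen_iUnion fun hz =>
    isOpen_iUnion fun _ => isOpen_interior
  have hWopen : IsOpen W := isOpen_iUnion fun z => isOpen_iUnion fun hz =>
    isOpen_iUnion fun _ => isOpen_interior
  have hcover : X ⊆ U ∪ W := by
    intro z hz
    by_cases hPz : P z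
    · exact Or.inl (Set.mem_iUnion.2 ⟨z, Set.mem_iUnion.2 ⟨hz, Set.mem_iUnion.2
        ⟨hPz, mem_interior_iff_mem_nhds.2 (hN z hz)⟩⟩⟩)
    · exact Or.inr (Set.mem_iUnion.2 ⟨z, Set.mem_iUnion.2 ⟨hz, Set.mem_iUnion.2
        ⟨hPz, mem_interior_iff_mem_nhds.2 (hN z hz)⟩⟩⟩)
  have hxU : x ∈ X ∩ U := ⟨hx, Set.mem_iUnion.2 ⟨x, Set.mem_iUnion.2 ⟨hx, Set.mem_iUnion.2
      ⟨hPx, mem_interior_iff_mem_nhds.2 (hN x hx)⟩⟩⟩⟩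
  have hdisj : ¬ (X ∩ (U ∩ W)).Nonempty := by
    rintro ⟨a, haX, haU, haW⟩
    obtain ⟨z1, hmem1⟩ := Set.mem_iUnion.1 haU
    obtain ⟨hz1, hmem1⟩ := Set.mem_iUnion.1 hmem1
    obtain ⟨hPz1, ha1⟩ := Set.mem_iUnion.1 hmem1
    obtain ⟨z2, hmem2⟩ := Set.mem_iUnion.1 haW
    obtain ⟨hz2, hmem2⟩ := Set.mem_iUnion.1 hmem2
    obtain ⟨hPz2, ha2⟩ := Set.mem_iUnion.1 hmem2
    -- P a : append segment z1 a
    have hPa : P a := poly_snoc hPz1 (hsegm z1 hz1 a ⟨ha1, haX⟩).1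
    -- P z2 : append segment a z2
    exact hPz2 (poly_snoc hPa (hsegm z2 hz2 a ⟨ha2, haX⟩).2)
  -- X ∩ W must be empty
  have hXW : ¬ (X ∩ W).Nonempty := fun hne => hdisj (hconn U W hUopen hWopen hcover ⟨x, hxU⟩ hne)
  -- hence y ∈ U
  have hyU : y ∈ U := (hcover hy).resolve_right fun h => hXW ⟨y, hy, h⟩
  obtain ⟨z, hmem⟩ := Set.mem_iUnion.1 hyU
  obtain ⟨hz, hmem⟩ := Set.mem_iUnion.1 hmem
  obtain ⟨hPz, hyN⟩ := Set.mem_iUnion.1 hmem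
  exact poly_snoc hPz (hsegm z hz y ⟨hyN, hy⟩).1
end

section
/- (Klee) Every closed, connected, and locally convex subset of a topological vector space is convex. -/
set_option maxHeartbeats 1000000

open Set Filter Topology

section KleeHelpers

set_option linter.unusedSectionVars false

variable {V : Type*} [TopologicalSpace V] [AddCommGroup V] [Module ℝ V]
    [IsTopologicalAddGroup V] [ContinuousSMul ℝ V] {X : Set V}

lemma klee_translate_nhds (z : V) {W : Set V} (hW : W ∈ 𝓝 (0 : V)) :
    (fun w => z + w) '' W ∈ 𝓝 z := by
  have h1 : (fun w => z + w) '' W ∈ Filter.map (fun w => z + w) (𝓝 (0 : V)) :=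
    image_mem_map hW
  have h2 := (Homeomorph.addLeft z).map_nhds_eq (0 : V)
  simp only [Homeomorph.coe_addLeft] at h2
  rw [h2] at h1
  simpa using h1

lemma klee_small_smul {Ω : Set V} (hΩ : Ω ∈ 𝓝 (0 : V)) (v : V) :
    ∃ ε : ℝ, 0 < ε ∧ ∀ r : ℝ, |r| ≤ ε → r • v ∈ Ω := by
  have hc : Continuous fun r : ℝ => r • v := continuous_id.smul continuous_const
  have h : Filter.Tendsto (fun r : ℝ => r • v) (𝓝 0) (𝓝 (0 : V)) := by
    simpa using hc.tendsto 0
  have h2 : (fun r : ℝ => r • v) ⁻¹' Ω ∈ 𝓝 (0 : ℝ) := h hΩ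
  rcases Metric.mem_nhds_iff.mp h2 with ⟨ε, hε, hball⟩
  refine ⟨ε / 2, by positivity, fun r hr => hball ?_⟩
  have : |r| < ε := lt_of_le_of_lt hr (by linarith)
  simpa [Real.dist_eq] using this

lemma klee_add_add {N : Set V} {z : V} (hN : N ∈ 𝓝 z) :
    ∃ W ∈ 𝓝 (0 : V), ∀ p ∈ W, ∀ q ∈ W, z + p + q ∈ N := by
  have hc : Continuous fun pq : V × V => z + pq.1 + pq.2 := by continuity
  have ht : Filter.Tendsto (fun pq : V × V => z + pq.1 + pq.2) (𝓝 ((0 : V), (0 : V))) (𝓝 z) := by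
    simpa using hc.tendsto ((0 : V), (0 : V))
  have h2 : (fun pq : V × V => z + pq.1 + pq.2) ⁻¹' N ∈ 𝓝 ((0 : V), (0 : V)) := ht hN
  rw [nhds_prod_eq, Filter.mem_prod_iff] at h2
  rcases h2 with ⟨W1, h1, W2, hw2, hsub⟩
  exact ⟨W1 ∩ W2, inter_mem h1 hw2, fun p hp q hq => hsub (Set.mk_mem_prod hp.1 hq.2)⟩

/-- The key perturbation step: if the segment from `a` to `c_t = (1-t)b + tc` lies in `X`,
then for some `t' > t` the segment from `a` to `c_{t'}` lies in `X` too. -/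
lemma klee_step (hlc : ∀ x ∈ X, ∃ N ∈ 𝓝 x, Convex ℝ (N ∩ X))
    {a b c : V}
    (hbc : ∀ s ∈ Icc (0:ℝ) 1, (1 - s) • b + s • c ∈ X)
    {t : ℝ} (ht0 : 0 ≤ t) (ht1 : t < 1)
    (hgood : ∀ l ∈ Icc (0:ℝ) 1, (1 - l) • a + l • ((1 - t) • b + t • c) ∈ X) :
    ∃ t', t < t' ∧ t' ≤ 1 ∧
      ∀ l ∈ Icc (0:ℝ) 1, (1 - l) • a + l • ((1 - t') • b + t' • c) ∈ X := by
  set D : V := (1 - t) • b + t • c with hD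
  set u : V := D - a with hu
  set e : V := c - b with he
  -- the base segment, as a compact set inside X
  have hseg_sub : ∀ l ∈ Icc (0:ℝ) 1, a + l • u ∈ X := by
    intro l hl
    have h := hgood l hl
    have : a + l • u = (1 - l) • a + l • D := by rw [hu]; module
    rw [this]; exact h
  set K : Set V := (fun l : ℝ => a + l • u) '' Icc 0 1 with hK
  have hKcomp : IsCompact K := isCompact_Icc.image (by continuity)
  have hKX : K ⊆ X := by
    rintro z ⟨l, hl, rfl⟩; exact hseg_sub l hl
  -- choose convex-trace neighborhoods and additive shrinkings
  have H : ∀ z ∈ K, ∃ N W : Set V, N ∈ 𝓝 z ∧ Convex ℝ (N ∩ X) ∧ W ∈ 𝓝 (0 : V) ∧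
      ∀ p ∈ W, ∀ q ∈ W, z + p + q ∈ N := by
    intro z hz
    obtain ⟨N, hN, hNc⟩ := hlc z (hKX hz)
    obtain ⟨W, hW, hWsub⟩ := klee_add_add hN
    exact ⟨N, W, hN, hNc, hW, hWsub⟩
  choose! N W hN hNc hW hWsub using H
  obtain ⟨T, hTsub, hTcover⟩ := hKcomp.elim_nhds_subcover
    (fun z => (fun w => z + w) '' W z) (fun z hz => klee_translate_nhds z (hW z hz))
  set Ω : Set V := ⋂ z ∈ T, W z with hΩ
  have hΩnhds : Ω ∈ 𝓝 (0 : V) :=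
    (biInter_mem T.finite_toSet).mpr fun z hz => hW z (hTsub z hz)
  have hΩsub : ∀ z ∈ T, Ω ⊆ W z := fun z hz => biInter_subset_of_mem hz
  -- the covering property
  have hcov : ∀ y ∈ K, ∃ Ny : Set V, Convex ℝ (Ny ∩ X) ∧ ∀ o ∈ Ω, y + o ∈ Ny := by
    intro y hy
    have := hTcover hy
    rw [Set.mem_iUnion₂] at this
    obtain ⟨z, hzT, hyU⟩ := this
    obtain ⟨p, hpW, rfl⟩ := hyU
    refine ⟨N z, hNc z (hTsub z hzT), fun o ho => ?_⟩
    have h3 : z + p + o ∈ N z := hWsub z (hTsub z hzT) p hpW o (hΩsub z hzT ho)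
    simpa [add_assoc] using h3
  -- local combination principle
  have hcomb : ∀ y ∈ K, ∀ p q : V, p ∈ X → q ∈ X → p - y ∈ Ω → q - y ∈ Ω →
      ∀ μ : ℝ, 0 ≤ μ → μ ≤ 1 → μ • p + (1 - μ) • q ∈ X := by
    intro y hy p q hp hq hpo hqo μ h0 h1
    obtain ⟨Ny, hconv, hmem⟩ := hcov y hy
    have hp' : p ∈ Ny ∩ X := ⟨by simpa using hmem _ hpo, hp⟩
    have hq' : q ∈ Ny ∩ X := ⟨by simpa using hmem _ hqo, hq⟩
    exact (hconv hp' hq' h0 (by linarith) (by ring)).2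
  -- small scalars
  obtain ⟨ε₁, hε₁pos, hε₁⟩ := klee_small_smul hΩnhds u
  obtain ⟨ε₂, hε₂pos, hε₂⟩ := klee_small_smul hΩnhds e
  set ρ : ℝ := min ε₁ (1/2) with hρ
  have hρpos : 0 < ρ := lt_min hε₁pos (by norm_num)
  have hρhalf : ρ ≤ 1/2 := min_le_right _ _
  have hρlt1 : ρ < 1 := lt_of_le_of_lt hρhalf (by norm_num)
  have hρε₁ : ρ ≤ ε₁ := min_le_left _ _
  set δ : ℝ := min ε₂ (1 - t) with hδ
  have hδpos : 0 < δ := lt_min hε₂pos (by linarith)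
  have hδle : δ ≤ 1 - t := min_le_right _ _
  have hδε₂ : δ ≤ ε₂ := min_le_left _ _
  set P : ℝ → ℝ → V := fun l h => a + l • u + (h * δ) • e with hP
  have hbottom : ∀ l ∈ Icc (0:ℝ) 1, P l 0 ∈ X := by
    intro l hl
    have : P l 0 = a + l • u := by simp [hP]
    rw [this]; exact hseg_sub l hl
  have hPK : ∀ l ∈ Icc (0:ℝ) 1, P l 0 ∈ K := by
    intro l hl
    have : P l 0 = a + l • u := by simp [hP]
    rw [this]; exact ⟨l, hl, rfl⟩
  have hright : ∀ h ∈ Icc (0:ℝ) 1, P 1 h ∈ X := by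
    intro h hh
    have hmem : t + h * δ ∈ Icc (0:ℝ) 1 := by
      constructor
      · have : 0 ≤ h * δ := mul_nonneg hh.1 hδpos.le
        linarith
      · have : h * δ ≤ δ := by nlinarith [hh.2, hδpos.le]
        linarith
    have := hbc (t + h * δ) hmem
    have heq : P 1 h = (1 - (t + h * δ)) • b + (t + h * δ) • c := by
      simp only [hP, hu, hD, he]; module
    rw [heq]; exact this
  -- the main induction: filling the sliver
  have hclaim : ∀ k : ℕ, ∀ l h : ℝ, 0 ≤ l → l ≤ 1 → 0 ≤ h → h ≤ (1 - ρ)^k * l →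
      1 - l ≤ k * ρ^2 → P l h ∈ X := by
    intro k
    induction k with
    | zero =>
      intro l h h0l hl1 h0h hhl hcl
      have hl : l = 1 := le_antisymm hl1 (by simpa using hcl)
      subst hl
      exact hright h ⟨h0h, by simpa using hhl⟩
    | succ k ih =>
      intro l h h0l hl1 h0h hhl hcl
      rcases eq_or_lt_of_le h0h with hh0 | hpos
      · rw [← hh0]; exact hbottom l ⟨h0l, hl1⟩
      have hβpos : (0:ℝ) < (1 - ρ)^k := pow_pos (by linarith) k
      have hβ1pos : (0:ℝ) < (1 - ρ)^(k+1) := pow_pos (by linarith) (k+1)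
      have hβle1 : (1 - ρ)^k ≤ 1 := pow_le_one₀ (by linarith) (by linarith)
      set l₁ : ℝ := min (l + ρ^2) 1 with hl₁def
      have hl₁le1 : l₁ ≤ 1 := min_le_right _ _
      have hll₁ : l ≤ l₁ := le_min (by nlinarith) hl1
      have hl₁pos : 0 < l₁ := by
        apply lt_min (by nlinarith) (by norm_num)
      have hl₁diff : l₁ - l ≤ ρ^2 := by
        have := min_le_left (l + ρ^2) 1; linarith
      set h₁ : ℝ := (1 - ρ)^k * l₁ with hh₁def
      have hh₁pos : 0 < h₁ := mul_pos hβpos hl₁pos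
      have hh₁le1 : h₁ ≤ 1 := by
        calc h₁ ≤ 1 * 1 := by
              apply mul_le_mul hβle1 hl₁le1 hl₁pos.le (by norm_num)
          _ = 1 := by norm_num
      set μ : ℝ := h / h₁ with hμdef
      have hμpos : 0 < μ := div_pos hpos hh₁pos
      have hμle : μ ≤ 1 - ρ := by
        rw [hμdef, div_le_iff₀ hh₁pos]
        have h1 : h ≤ (1 - ρ)^(k+1) * l := hhl
        have h2 : (1 - ρ)^(k+1) * l ≤ (1 - ρ)^(k+1) * l₁ := by
          apply mul_le_mul_of_nonneg_left hll₁ hβ1pos.le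
        have h3 : (1 - ρ)^(k+1) * l₁ = (1 - ρ) * h₁ := by
          rw [hh₁def, pow_succ]; ring
        linarith
      have hνpos : ρ ≤ 1 - μ := by linarith
      have hν0 : 0 < 1 - μ := by linarith
      set l' : ℝ := (l - μ * l₁) / (1 - μ) with hl'def
      have hμl₁ : μ * l₁ = h / (1 - ρ)^k := by
        rw [hμdef, hh₁def]; field_simp
      have hnum : 0 ≤ l - μ * l₁ := by
        rw [hμl₁]
        rw [sub_nonneg, div_le_iff₀ hβpos]
        calc h ≤ (1 - ρ)^(k+1) * l := hhl
          _ ≤ (1 - ρ)^k * l := by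
              rw [pow_succ]
              nlinarith [mul_nonneg (mul_nonneg hβpos.le hρpos.le) h0l]
          _ = l * (1 - ρ)^k := by ring
      have hl'0 : 0 ≤ l' := div_nonneg hnum hν0.le
      have hl'le : l' ≤ l₁ := by
        rw [hl'def, div_le_iff₀ hν0]
        nlinarith
      have hdiff : l₁ - l' ≤ ρ := by
        have heq : l₁ - l' = (l₁ - l) / (1 - μ) := by
          rw [hl'def]; field_simp; ring
        rw [heq, div_le_iff₀ hν0]
        nlinarith
      -- anchor point in K
      have hl₁mem : l₁ ∈ Icc (0:ℝ) 1 := ⟨hl₁pos.le, hl₁le1⟩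
      have hyK : P l₁ 0 ∈ K := hPK l₁ hl₁mem
      -- the two points to combine
      have hA : P l₁ h₁ ∈ X := by
        apply ih l₁ h₁ hl₁pos.le hl₁le1 hh₁pos.le (le_of_eq hh₁def)
        rcases le_total (l + ρ^2) 1 with hc | hc
        · have : l₁ = l + ρ^2 := min_eq_left hc
          rw [this]; push_cast at hcl ⊢; linarith
        · have : l₁ = 1 := min_eq_right hc
          rw [this]; simp only [sub_self]; positivity
      have hB : P l' 0 ∈ X := hbottom l' ⟨hl'0, hl'le.trans hl₁le1⟩
      -- offsets in Ω
      have hoffA : P l₁ h₁ - P l₁ 0 ∈ Ω := by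
        have heq : P l₁ h₁ - P l₁ 0 = (h₁ * δ) • e := by
          simp only [hP]; module
        rw [heq]
        apply hε₂
        rw [abs_of_nonneg (by positivity)]
        nlinarith
      have hoffB : P l' 0 - P l₁ 0 ∈ Ω := by
        have heq : P l' 0 - P l₁ 0 = (l' - l₁) • u := by
          simp only [hP]; module
        rw [heq]
        apply hε₁
        rw [abs_of_nonpos (by linarith)]
        linarith
      have hres := hcomb (P l₁ 0) hyK (P l₁ h₁) (P l' 0) hA hB hoffA hoffB μ hμpos.le
        (by linarith)
      have hc1 : μ * l₁ + (1 - μ) * l' = l := by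
        have h5 : (1 - μ) * l' = l - μ * l₁ := by
          rw [hl'def]; field_simp
        linarith
      have hc2 : μ * h₁ = h := by
        rw [hμdef]; field_simp
      have hfin : μ • P l₁ h₁ + (1 - μ) • P l' 0 = P (μ * l₁ + (1 - μ) * l') (μ * h₁) := by
        simp only [hP]; module
      rw [hfin, hc1, hc2] at hres
      exact hres
  -- conclude: choose K' with K' * ρ^2 ≥ 1
  obtain ⟨K', hK'⟩ := exists_nat_ge (1 / ρ^2)
  have hK'ρ : 1 ≤ (K' : ℝ) * ρ^2 := by
    rw [div_le_iff₀ (by positivity)] at hK'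
    linarith
  set β : ℝ := (1 - ρ)^K' with hβ
  have hβpos : 0 < β := pow_pos (by linarith) _
  have hβle1 : β ≤ 1 := pow_le_one₀ (by linarith) (by linarith)
  refine ⟨t + β * δ, by nlinarith, by nlinarith, ?_⟩
  intro l hl
  have hmain := hclaim K' l (β * l) hl.1 hl.2 (mul_nonneg hβpos.le hl.1)
    (le_of_eq rfl) (by nlinarith [hl.1])
  have heq : (1 - l) • a + l • ((1 - (t + β * δ)) • b + (t + β * δ) • c) = P l (β * l) := by
    simp only [hP, hu, hD, he]
    match_scalars <;> ring
  rw [heq]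
  exact hmain

/-- The two-segment lemma: if `[a,b] ⊆ X` and `[b,c] ⊆ X`, then `[a,c] ⊆ X`. -/
lemma klee_two_segment (hX : IsClosed X)
    (hlc : ∀ x ∈ X, ∃ N ∈ 𝓝 x, Convex ℝ (N ∩ X)) {a b c : V}
    (hab : ∀ l ∈ Icc (0:ℝ) 1, (1 - l) • a + l • b ∈ X)
    (hbc : ∀ s ∈ Icc (0:ℝ) 1, (1 - s) • b + s • c ∈ X) :
    ∀ l ∈ Icc (0:ℝ) 1, (1 - l) • a + l • c ∈ X := by
  set E : Set ℝ := {t | t ∈ Icc (0:ℝ) 1 ∧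
    ∀ l ∈ Icc (0:ℝ) 1, (1 - l) • a + l • ((1 - t) • b + t • c) ∈ X} with hE
  have h0E : (0:ℝ) ∈ E := by
    refine ⟨⟨le_refl 0, zero_le_one⟩, fun l hl => ?_⟩
    have heq : (1 - l) • a + l • ((1 - (0:ℝ)) • b + (0:ℝ) • c) = (1 - l) • a + l • b := by
      module
    rw [heq]; exact hab l hl
  have hne : E.Nonempty := ⟨0, h0E⟩
  have hbdd : BddAbove E := ⟨1, fun t ht => ht.1.2⟩
  set T := sSup E with hT
  have hT0 : 0 ≤ T := le_csSup hbdd h0E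
  have hT1 : T ≤ 1 := csSup_le hne fun t ht => ht.1.2
  have hTgood : ∀ l ∈ Icc (0:ℝ) 1, (1 - l) • a + l • ((1 - T) • b + T • c) ∈ X := by
    intro l hl
    have hcont : Continuous fun t : ℝ => (1 - l) • a + l • ((1 - t) • b + t • c) :=
      continuous_const.add
        ((((continuous_const.sub continuous_id).smul continuous_const).add
          (continuous_id.smul continuous_const)).const_smul l)
    have hcl : IsClosed {t : ℝ | (1 - l) • a + l • ((1 - t) • b + t • c) ∈ X} :=
      hX.preimage hcont
    have hsub : E ⊆ {t : ℝ | (1 - l) • a + l • ((1 - t) • b + t • c) ∈ X} :=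
      fun t ht => ht.2 l hl
    have hmem : T ∈ closure E := (isLUB_csSup hne hbdd).mem_closure hne
    exact hcl.closure_subset (closure_mono hsub hmem)
  rcases eq_or_lt_of_le hT1 with hTeq | hTlt
  · intro l hl
    have := hTgood l hl
    rw [hTeq] at this
    have heq : (1 - l) • a + l • ((1 - (1:ℝ)) • b + (1:ℝ) • c) = (1 - l) • a + l • c := by
      module
    rw [heq] at this
    exact this
  · exfalso
    obtain ⟨t', ht'1, ht'2, ht'3⟩ := klee_step hlc hbc hT0 hTlt hTgood
    have ht'E : t' ∈ E := ⟨⟨by linarith, ht'2⟩, ht'3⟩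
    exact absurd (le_csSup hbdd ht'E) (not_le.mpr ht'1)

end KleeHelpers

/-- (Klee) Every closed, connected, and locally convex subset of a topological
vector space is convex. -/
theorem stmt_1 {V : Type*} [TopologicalSpace V] [AddCommGroup V] [Module ℝ V]
    [IsTopologicalAddGroup V] [ContinuousSMul ℝ V]
    {X : Set V} (hclosed : IsClosed X) (hconn : IsPreconnected X)
    (hlc : ∀ x ∈ X, ∃ N ∈ nhds x, Convex ℝ (N ∩ X)) :
    Convex ℝ X := by
  rw [convex_iff_segment_subset]
  intro x hx y hy
  suffices H : ∀ p ∈ X, ∀ l ∈ Set.Icc (0:ℝ) 1, (1 - l) • x + l • p ∈ X by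
    intro z hz
    rw [segment_eq_image] at hz
    obtain ⟨θ, hθ, rfl⟩ := hz
    exact H y hy θ hθ
  set Y : Set V := {p | p ∈ X ∧ ∀ l ∈ Set.Icc (0:ℝ) 1, (1 - l) • x + l • p ∈ X} with hYdef
  have hYx : x ∈ Y := by
    refine ⟨hx, fun l hl => ?_⟩
    have heq : (1 - l) • x + l • x = x := by module
    rw [heq]; exact hx
  have hYclosed : IsClosed Y := by
    have heq : Y = X ∩ ⋂ l : Set.Icc (0:ℝ) 1,
        (fun p => (1 - (l:ℝ)) • x + (l:ℝ) • p) ⁻¹' X := by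
      ext p
      constructor
      · rintro ⟨h1, h2⟩
        exact ⟨h1, Set.mem_iInter.2 fun l => h2 l l.2⟩
      · rintro ⟨h1, h2⟩
        exact ⟨h1, fun l hl => Set.mem_iInter.1 h2 ⟨l, hl⟩⟩
    rw [heq]
    exact hclosed.inter (isClosed_iInter fun l =>
      hclosed.preimage (continuous_const.add (continuous_id.const_smul _)))
  have hYopen : ∀ p ∈ Y, ∃ U : Set V, IsOpen U ∧ p ∈ U ∧ X ∩ U ⊆ Y := by
    intro p hp
    obtain ⟨N, hN, hNc⟩ := hlc p hp.1
    refine ⟨interior N, isOpen_interior, mem_interior_iff_mem_nhds.2 hN, ?_⟩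
    rintro q ⟨hqX, hqN⟩
    refine ⟨hqX, ?_⟩
    have hpq : ∀ s ∈ Set.Icc (0:ℝ) 1, (1 - s) • p + s • q ∈ X := by
      intro s hs
      exact (hNc ⟨mem_of_mem_nhds hN, hp.1⟩ ⟨interior_subset hqN, hqX⟩
        (by linarith [hs.2]) hs.1 (by ring)).2
    exact klee_two_segment hclosed hlc hp.2 hpq
  have key : X ⊆ Y := by
    choose U hUopen hUmem hUsub using hYopen
    by_contra hnot
    rw [Set.not_subset] at hnot
    obtain ⟨q, hqX, hqY⟩ := hnot
    set A : Set V := ⋃ (p : V) (hp : p ∈ Y), U p hp with hA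
    have hAopen : IsOpen A := isOpen_iUnion fun p => isOpen_iUnion fun hp => hUopen p hp
    have hBopen : IsOpen Yᶜ := hYclosed.isOpen_compl
    have hcover : X ⊆ A ∪ Yᶜ := by
      intro r hr
      by_cases hrY : r ∈ Y
      · exact Or.inl (Set.mem_iUnion₂.2 ⟨r, hrY, hUmem r hrY⟩)
      · exact Or.inr hrY
    have h1 : (X ∩ A).Nonempty :=
      ⟨x, hx, Set.mem_iUnion₂.2 ⟨x, hYx, hUmem x hYx⟩⟩
    have h2 : (X ∩ Yᶜ).Nonempty := ⟨q, hqX, hqY⟩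
    obtain ⟨r, hrX, hrA, hrY⟩ := hconn A Yᶜ hAopen hBopen hcover h1 h2
    obtain ⟨p, hpY, hrU⟩ := Set.mem_iUnion₂.1 hrA
    exact hrY (hUsub p hpY ⟨hrX, hrU⟩)
  exact fun p hp => (key hp).2
end

section
/- Let X be a closed, connected, locally convex subset of a topological vector space. If [x,y] ⊆ X and [y,z] ⊆ X, then [x,z] ⊆ X (one can 'cut corners' in X). -/
set_option maxHeartbeats 1000000

theorem crux {V : Type*} [TopologicalSpace V] [AddCommGroup V] [Module ℝ V]
    [IsTopologicalAddGroup V] [ContinuousSMul ℝ V]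
    {X K W : Set V} (hX : IsClosed X)
    (hstar : ∀ a ∈ K ∩ X, ∀ b ∈ K ∩ X, b - a ∈ W → segment ℝ a b ⊆ X)
    {p q r : V} (hqp : segment ℝ q p ⊆ X) (hqr : segment ℝ q r ⊆ X)
    {w : ℝ} (hw : 0 < w)
    (hW : ∀ t u : ℝ, |t| ≤ w → |u| ≤ 1 → t • (r - q) + u • (p - q) ∈ W)
    (hK : ∀ h ξ : ℝ, 0 ≤ h → 0 ≤ ξ → h + ξ ≤ 1 → q + h • (r - q) + ξ • (p - q) ∈ K) :
    segment ℝ p r ⊆ X := by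
  classical
  set φ : ℝ → ℝ → V := fun h ξ => q + h • (r - q) + ξ • (p - q) with hφdef
  -- base points of stalks are in X
  have hbase : ∀ h : ℝ, 0 ≤ h → h ≤ 1 → φ h 0 ∈ X := by
    intro h h0 h1
    have : φ h 0 = (1 - h) • q + h • r := by simp only [hφdef]; module
    rw [this]
    apply hqr
    rw [segment_eq_image]
    exact ⟨h, ⟨h0, h1⟩, rfl⟩
  have hleft : ∀ ξ : ℝ, 0 ≤ ξ → ξ ≤ 1 → φ 0 ξ ∈ X := by
    intro ξ h0 h1
    have : φ 0 ξ = (1 - ξ) • q + ξ • p := by simp only [hφdef]; module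
    rw [this]
    apply hqp
    rw [segment_eq_image]
    exact ⟨ξ, ⟨h0, h1⟩, rfl⟩
  set A : ℝ → Set ℝ := fun h =>
    {ξ | 0 ≤ ξ ∧ ξ ≤ 1 - h ∧ ∀ ξ', 0 ≤ ξ' → ξ' ≤ ξ → φ h ξ' ∈ X} with hAdef
  have hA0 : ∀ h : ℝ, 0 ≤ h → h ≤ 1 → (0:ℝ) ∈ A h := by
    intro h h0 h1
    refine ⟨le_refl _, by linarith, ?_⟩
    intro ξ' h0' h1'
    have : ξ' = 0 := le_antisymm h1' h0'
    rw [this]; exact hbase h h0 h1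
  have hAne : ∀ h : ℝ, 0 ≤ h → h ≤ 1 → (A h).Nonempty := fun h h0 h1 => ⟨0, hA0 h h0 h1⟩
  have hAbdd : ∀ h : ℝ, BddAbove (A h) := by
    intro h; exact ⟨1 - h, fun ξ hξ => hξ.2.1⟩
  set Ξ : ℝ → ℝ := fun h => sSup (A h) with hΞdef
  have hΞ0 : ∀ h : ℝ, 0 ≤ h → h ≤ 1 → 0 ≤ Ξ h := by
    intro h h0 h1; exact le_csSup (hAbdd h) (hA0 h h0 h1)
  have hΞ1 : ∀ h : ℝ, 0 ≤ h → h ≤ 1 → Ξ h ≤ 1 - h := by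
    intro h h0 h1
    exact csSup_le (hAne h h0 h1) (fun ξ hξ => hξ.2.1)
  -- attainment
  have hgood : ∀ h : ℝ, 0 ≤ h → h ≤ 1 → Ξ h ∈ A h := by
    intro h h0 h1
    have hS : IsClosed {ξ : ℝ | φ h ξ ∈ X} := by
      apply IsClosed.preimage _ hX
      simp only [hφdef]
      fun_prop
    have hmem : ∀ ξ', 0 ≤ ξ' → ξ' < Ξ h → φ h ξ' ∈ X := by
      intro ξ' h0' hlt
      obtain ⟨a, ha, hlt'⟩ := exists_lt_of_lt_csSup (hAne h h0 h1) hlt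
      exact ha.2.2 ξ' h0' (le_of_lt hlt')
    have hΞmem : φ h (Ξ h) ∈ X := by
      rcases eq_or_lt_of_le (hΞ0 h h0 h1) with heq | hpos
      · rw [← heq]; exact hbase h h0 h1
      · have hsub : Set.Ico (0:ℝ) (Ξ h) ⊆ {ξ : ℝ | φ h ξ ∈ X} := by
          intro ξ' hξ'; exact hmem ξ' hξ'.1 hξ'.2
        have : Ξ h ∈ closure (Set.Ico (0:ℝ) (Ξ h)) := by
          rw [closure_Ico (ne_of_lt hpos)]
          exact ⟨le_of_lt hpos, le_refl _⟩
        have := closure_mono hsub this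
        rwa [hS.closure_eq] at this
    refine ⟨hΞ0 h h0 h1, hΞ1 h h0 h1, ?_⟩
    intro ξ' h0' hle'
    rcases eq_or_lt_of_le hle' with heq | hlt
    · rw [heq]; exact hΞmem
    · exact hmem ξ' h0' hlt
  -- local concavity
  have hconc : ∀ h₁ h₂ : ℝ, 0 ≤ h₁ → h₁ ≤ 1 → 0 ≤ h₂ → h₂ ≤ 1 → |h₁ - h₂| ≤ w →
      ∀ lam : ℝ, 0 ≤ lam → lam ≤ 1 →
      (1 - lam) * Ξ h₁ + lam * Ξ h₂ ≤ Ξ ((1 - lam) * h₁ + lam * h₂) := by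
    intro h₁ h₂ h10 h11 h20 h21 hdist lam l0 l1
    set h : ℝ := (1 - lam) * h₁ + lam * h₂ with hh
    have h0 : 0 ≤ h := by nlinarith
    have hle1 : h ≤ 1 := by nlinarith
    set S : ℝ := (1 - lam) * Ξ h₁ + lam * Ξ h₂ with hS
    have hS0 : 0 ≤ S := by
      have := hΞ0 h₁ h10 h11; have := hΞ0 h₂ h20 h21; nlinarith
    have hS1 : S ≤ 1 - h := by
      have := hΞ1 h₁ h10 h11; have := hΞ1 h₂ h20 h21
      simp only [hS, hh]; nlinarith
    refine le_csSup (hAbdd h) ⟨hS0, hS1, ?_⟩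
    intro ξ' h0' hle'
    rcases eq_or_lt_of_le hS0 with heqS | hposS
    · have : ξ' = 0 := le_antisymm (by linarith) h0'
      rw [this]; exact hbase h h0 hle1
    · set c : ℝ := ξ' / S with hc
      have hc0 : 0 ≤ c := div_nonneg h0' (le_of_lt hposS)
      have hc1 : c ≤ 1 := by
        rw [hc, div_le_one hposS]; exact hle'
      set ξ₁ : ℝ := c * Ξ h₁ with hξ₁
      set ξ₂ : ℝ := c * Ξ h₂ with hξ₂
      have hg₁ := hgood h₁ h10 h11
      have hg₂ := hgood h₂ h20 h21
      have hΞ₁0 := hΞ0 h₁ h10 h11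
      have hΞ₂0 := hΞ0 h₂ h20 h21
      have hξ₁0 : 0 ≤ ξ₁ := mul_nonneg hc0 hΞ₁0
      have hξ₂0 : 0 ≤ ξ₂ := mul_nonneg hc0 hΞ₂0
      have hξ₁le : ξ₁ ≤ Ξ h₁ := by nlinarith
      have hξ₂le : ξ₂ ≤ Ξ h₂ := by nlinarith
      have hB₁X : φ h₁ ξ₁ ∈ X := hg₁.2.2 ξ₁ hξ₁0 hξ₁le
      have hB₂X : φ h₂ ξ₂ ∈ X := hg₂.2.2 ξ₂ hξ₂0 hξ₂le
      have hB₁K : φ h₁ ξ₁ ∈ K := by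
        apply hK h₁ ξ₁ h10 hξ₁0
        have := hΞ1 h₁ h10 h11; nlinarith
      have hB₂K : φ h₂ ξ₂ ∈ K := by
        apply hK h₂ ξ₂ h20 hξ₂0
        have := hΞ1 h₂ h20 h21; nlinarith
      have hWmem : φ h₁ ξ₁ - φ h₂ ξ₂ ∈ W := by
        have hid : φ h₁ ξ₁ - φ h₂ ξ₂ = (h₁ - h₂) • (r - q) + (ξ₁ - ξ₂) • (p - q) := by
          simp only [hφdef]; module
        rw [hid]
        apply hW _ _ hdist
        have hub : Ξ h₁ ≤ 1 := by have := hΞ1 h₁ h10 h11; linarith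
        have hub2 : Ξ h₂ ≤ 1 := by have := hΞ1 h₂ h20 h21; linarith
        have hub1' : ξ₁ ≤ 1 := by nlinarith
        have hub2' : ξ₂ ≤ 1 := by nlinarith
        rw [abs_le]
        constructor
        · linarith
        · linarith
      have hseg := hstar (φ h₂ ξ₂) ⟨hB₂K, hB₂X⟩ (φ h₁ ξ₁) ⟨hB₁K, hB₁X⟩ hWmem
      have hmem : (1 - lam) • (φ h₁ ξ₁) + lam • (φ h₂ ξ₂) ∈ segment ℝ (φ h₂ ξ₂) (φ h₁ ξ₁) := by
        rw [segment_eq_image]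
        refine ⟨1 - lam, ⟨by linarith, by linarith⟩, ?_⟩
        simp only []
        have : (1:ℝ) - (1 - lam) = lam := by ring
        rw [this]; abel
      have hpoint := hseg hmem
      have hid2 : (1 - lam) • (φ h₁ ξ₁) + lam • (φ h₂ ξ₂) = φ h ((1 - lam) * ξ₁ + lam * ξ₂) := by
        simp only [hφdef, hh]; module
      have hcS : (1 - lam) * ξ₁ + lam * ξ₂ = ξ' := by
        simp only [hξ₁, hξ₂, hc]
        field_simp
        ring
      rw [hid2, hcS] at hpoint
      exact hpoint
  -- the grid
  set N : ℕ := ⌈2 / w⌉₊ + 1 with hN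
  have hNpos : 0 < N := Nat.succ_pos _
  have hNR : (0:ℝ) < N := by positivity
  have hNw : 2 / (N:ℝ) ≤ w := by
    rw [div_le_iff₀ hNR]
    have h1 : 2 / w ≤ (N:ℝ) := by
      have h2 := Nat.le_ceil (2 / w)
      have h3 : (⌈2 / w⌉₊ : ℝ) ≤ (N:ℝ) := by
        simp only [hN]; push_cast; linarith
      linarith
    calc (2:ℝ) = (2 / w) * w := by field_simp
    _ ≤ (N:ℝ) * w := by nlinarith
    _ = w * N := by ring
  set g : ℕ → ℝ := fun i => Ξ ((i:ℝ) / (N:ℝ)) with hg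
  have hgin : ∀ i : ℕ, i ≤ N → 0 ≤ (i:ℝ)/(N:ℝ) ∧ (i:ℝ)/(N:ℝ) ≤ 1 := by
    intro i hi
    constructor
    · positivity
    · rw [div_le_one hNR]; exact_mod_cast hi
  have hXizero : Ξ 0 = 1 := by
    have h1A : (1:ℝ) ∈ A 0 := by
      refine ⟨zero_le_one, by norm_num, ?_⟩
      intro ξ' h0' h1'
      exact hleft ξ' h0' h1'
    have hle : (1:ℝ) ≤ Ξ 0 := le_csSup (hAbdd 0) h1A
    have hge : Ξ 0 ≤ 1 := by have := hΞ1 0 le_rfl zero_le_one; linarith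
    linarith
  have hg0 : g 0 = 1 := by
    simp only [hg]
    rw [Nat.cast_zero, zero_div]
    exact hXizero
  have hgN : 0 ≤ g N := hΞ0 ((N:ℝ)/(N:ℝ)) (hgin N le_rfl).1 (hgin N le_rfl).2
  have hstep : ∀ i : ℕ, i + 2 ≤ N → g i + g (i+2) ≤ 2 * g (i+1) := by
    intro i hi
    have hb1 := hgin i (by omega)
    have hd : |(i:ℝ)/(N:ℝ) - ((i:ℝ)+2)/(N:ℝ)| ≤ w := by
      have he : (i:ℝ)/(N:ℝ) - ((i:ℝ)+2)/(N:ℝ) = -(2/(N:ℝ)) := by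
        rw [div_sub_div_same, ← neg_div]
        norm_num
      rw [he, abs_neg, abs_of_pos (by positivity)]
      exact hNw
    have hi2 : ((i:ℝ)+2)/(N:ℝ) ≤ 1 := by
      rw [div_le_one hNR]
      have : ((i:ℝ) + 2) = ((i + 2 : ℕ) : ℝ) := by push_cast; ring
      rw [this]; exact_mod_cast hi
    have hcc := hconc ((i:ℝ)/(N:ℝ)) (((i:ℝ)+2)/(N:ℝ)) hb1.1 hb1.2
      (by positivity) hi2 hd (1/2) (by norm_num) (by norm_num)
    have heq : (1 - 1/2) * ((i:ℝ)/(N:ℝ)) + (1/2) * (((i:ℝ)+2)/(N:ℝ)) = ((i:ℝ)+1)/(N:ℝ) := by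
      field_simp; ring
    rw [heq] at hcc
    have e1 : g (i+2) = Ξ (((i:ℝ)+2)/(N:ℝ)) := by simp only [hg]; norm_num
    have e2 : g (i+1) = Ξ (((i:ℝ)+1)/(N:ℝ)) := by simp only [hg]; norm_num
    rw [e1, e2]
    simp only [hg] at hcc ⊢
    linarith
  have hdmono : ∀ j k : ℕ, j ≤ k → k + 1 ≤ N → g j - g (j+1) ≤ g k - g (k+1) := by
    intro j k hjk
    induction k with
    | zero =>
      intro _
      have hj0 : j = 0 := by omega
      rw [hj0]
    | succ k ih =>
      intro hk1
      rcases Nat.lt_or_ge j (k+1) with hlt | hge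
      · have ha : g j - g (j+1) ≤ g k - g (k+1) := ih (by omega) (by omega)
        have hb : g k - g (k+1) ≤ g (k+1) - g (k+2) := by
          have := hstep k (by omega)
          linarith
        linarith
      · have hj : j = k+1 := by omega
        rw [hj]
  have htel : ∀ i : ℕ, g 0 - g i = ∑ j ∈ Finset.range i, (g j - g (j+1)) := by
    intro i
    induction i with
    | zero => simp
    | succ i ih => rw [Finset.sum_range_succ, ← ih]; ring
  have hchord : ∀ i : ℕ, i ≤ N → 1 - (i:ℝ)/(N:ℝ) ≤ g i := by
    intro i hi
    rcases Nat.eq_or_lt_of_le hi with heq | hlt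
    · have hgi : g i = g N := by rw [heq]
      have hiN' : (i:ℝ) = (N:ℝ) := by exact_mod_cast heq
      rw [hiN', div_self (ne_of_gt hNR), hgi]
      linarith
    · have hpre_le : ∀ j ∈ Finset.range i, g j - g (j+1) ≤ g i - g (i+1) := by
        intro j hj
        simp only [Finset.mem_range] at hj
        exact hdmono j i (le_of_lt hj) (by omega)
      have hsuf_ge : ∀ k ∈ Finset.Ico i N, g i - g (i+1) ≤ g k - g (k+1) := by
        intro k hk
        simp only [Finset.mem_Ico] at hk
        exact hdmono i k hk.1 (by omega)
      have hSpre : ∑ j ∈ Finset.range i, (g j - g (j+1)) ≤ (i:ℝ) * (g i - g (i+1)) := by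
        calc ∑ j ∈ Finset.range i, (g j - g (j+1))
            ≤ ∑ _j ∈ Finset.range i, (g i - g (i+1)) := Finset.sum_le_sum hpre_le
        _ = (i:ℝ) * (g i - g (i+1)) := by
            rw [Finset.sum_const, Finset.card_range, nsmul_eq_mul]
      have hSsuf : ((N:ℝ) - (i:ℝ)) * (g i - g (i+1)) ≤ ∑ k ∈ Finset.Ico i N, (g k - g (k+1)) := by
        have hcard : ((N - i : ℕ) : ℝ) = (N:ℝ) - (i:ℝ) := by
          rw [Nat.cast_sub hi]
        calc ((N:ℝ) - (i:ℝ)) * (g i - g (i+1))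
            = ∑ _k ∈ Finset.Ico i N, (g i - g (i+1)) := by
              rw [Finset.sum_const, Nat.card_Ico, nsmul_eq_mul, hcard]
        _ ≤ ∑ k ∈ Finset.Ico i N, (g k - g (k+1)) := Finset.sum_le_sum hsuf_ge
      have hsplit : (∑ j ∈ Finset.range i, (g j - g (j+1)))
            + (∑ k ∈ Finset.Ico i N, (g k - g (k+1)))
          = ∑ j ∈ Finset.range N, (g j - g (j+1)) := by
        simp only [Finset.range_eq_Ico]
        exact Finset.sum_Ico_consecutive _ (Nat.zero_le i) hi
      have htotal : (∑ j ∈ Finset.range i, (g j - g (j+1)))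
            + (∑ k ∈ Finset.Ico i N, (g k - g (k+1))) ≤ 1 := by
        rw [hsplit, ← htel N, hg0]; linarith
      have hiR : (0:ℝ) ≤ (i:ℝ) := by positivity
      have hNiR : (0:ℝ) ≤ (N:ℝ) - (i:ℝ) := by
        have : (i:ℝ) ≤ (N:ℝ) := by exact_mod_cast hi
        linarith
      have hkey : (N:ℝ) * (∑ j ∈ Finset.range i, (g j - g (j+1))) ≤ (i:ℝ) := by
        nlinarith [hSpre, hSsuf, htotal]
      have hfin : g 0 - g i ≤ (i:ℝ)/(N:ℝ) := by
        rw [htel i, le_div_iff₀ hNR]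
        linarith [hkey]
      rw [hg0] at hfin
      linarith
  -- interpolate: Ξ h ≥ 1 - h for all h ∈ [0,1]
  have hXge : ∀ h : ℝ, 0 ≤ h → h ≤ 1 → 1 - h ≤ Ξ h := by
    intro h h0 h1
    rcases eq_or_lt_of_le h1 with heq | hlt
    · rw [heq]
      simpa using hΞ0 1 zero_le_one le_rfl
    · set i : ℕ := ⌊h * N⌋₊ with hi
      have hile : (i:ℝ) ≤ h * N := Nat.floor_le (by positivity)
      have hiub : h * N < i + 1 := Nat.lt_floor_add_one _
      have hiN : i < N := by
        have : h * N < N := by nlinarith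
        have h2 : (i:ℝ) < (N:ℝ) := lt_of_le_of_lt hile this
        exact_mod_cast h2
      set lam : ℝ := h * N - i with hlam
      have hl0 : 0 ≤ lam := by simp only [hlam]; linarith
      have hl1 : lam ≤ 1 := by simp only [hlam]; linarith
      have hb1 := hgin i (le_of_lt hiN)
      have hb2 := hgin (i+1) hiN
      have hd : |(i:ℝ)/(N:ℝ) - ((i+1:ℕ):ℝ)/(N:ℝ)| ≤ w := by
        have he : (i:ℝ)/(N:ℝ) - ((i+1:ℕ):ℝ)/(N:ℝ) = -(1/(N:ℝ)) := by
          push_cast; field_simp; ring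
        rw [he, abs_neg, abs_of_pos (by positivity)]
        have h12 : 1/(N:ℝ) ≤ 2/(N:ℝ) := by gcongr <;> norm_num
        linarith [hNw]
      have hcc := hconc ((i:ℝ)/(N:ℝ)) (((i+1:ℕ):ℝ)/(N:ℝ)) hb1.1 hb1.2 hb2.1 hb2.2 hd
        lam hl0 hl1
      have hcast : ((i+1:ℕ):ℝ) = (i:ℝ) + 1 := by push_cast; ring
      have heqh : (1 - lam) * ((i:ℝ)/(N:ℝ)) + lam * (((i+1:ℕ):ℝ)/(N:ℝ)) = h := by
        rw [hcast, hlam]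
        field_simp
        ring
      rw [heqh] at hcc
      have hc1 := hchord i (le_of_lt hiN)
      have hc2 := hchord (i+1) hiN
      simp only [hg] at hc1 hc2
      have hub : (1 - lam) * (1 - (i:ℝ)/(N:ℝ)) + lam * (1 - ((i+1:ℕ):ℝ)/(N:ℝ))
          ≤ (1 - lam) * Ξ ((i:ℝ)/(N:ℝ)) + lam * Ξ (((i+1:ℕ):ℝ)/(N:ℝ)) := by
        have := hΞ0 ((i:ℝ)/(N:ℝ)) hb1.1 hb1.2
        nlinarith [hc1, hc2]
      have heq2 : (1 - lam) * (1 - (i:ℝ)/(N:ℝ)) + lam * (1 - ((i+1:ℕ):ℝ)/(N:ℝ)) = 1 - h := by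
        rw [hcast, hlam]
        field_simp
        ring
      rw [heq2] at hub
      linarith
  -- conclusion
  intro v hv
  rw [segment_eq_image] at hv
  obtain ⟨t, ⟨ht0, ht1⟩, rfl⟩ := hv
  have hgd := hgood t ht0 ht1
  have hge := hXge t ht0 ht1
  have hmem : φ t (1 - t) ∈ X := hgd.2.2 (1 - t) (by linarith) (by linarith [hΞ1 t ht0 ht1])
  have hid : φ t (1 - t) = (1 - t) • p + t • r := by
    simp only [hφdef]; module
  rwa [hid] at hmem
theorem comboK {V : Type*} [AddCommGroup V] [Module ℝ V] {K : Set V}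
    (hKc : Convex ℝ K) {p q r : V} (hq : q ∈ K) (hp : p ∈ K) (hr : r ∈ K)
    {h ξ : ℝ} (h0 : 0 ≤ h) (ξ0 : 0 ≤ ξ) (hs : h + ξ ≤ 1) :
    q + h • (r - q) + ξ • (p - q) ∈ K := by
  have hid : q + h • (r - q) + ξ • (p - q) = (1 - h - ξ) • q + ξ • p + h • r := by module
  rw [hid]
  rcases eq_or_lt_of_le (add_nonneg h0 ξ0) with hz | hpos
  · have hh : h = 0 := by linarith
    have hξ : ξ = 0 := by linarith
    rw [hh, hξ]
    simpa using hq
  · have hsne : h + ξ ≠ 0 := ne_of_gt hpos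
    have inner : (ξ/(h+ξ)) • p + (h/(h+ξ)) • r ∈ K := by
      apply hKc hp hr (by positivity) (by positivity)
      field_simp
      ring
    have hmem : (1 - (h+ξ)) • q + (h+ξ) • ((ξ/(h+ξ)) • p + (h/(h+ξ)) • r) ∈ K :=
      hKc hq inner (by linarith) (le_of_lt hpos) (by ring)
    have hid2 : (1 - (h+ξ)) • q + (h+ξ) • ((ξ/(h+ξ)) • p + (h/(h+ξ)) • r)
        = (1 - h - ξ) • q + ξ • p + h • r := by
      rw [smul_add, smul_smul, smul_smul]
      have e1 : (h+ξ) * (ξ/(h+ξ)) = ξ := by field_simp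
      have e2 : (h+ξ) * (h/(h+ξ)) = h := by field_simp
      rw [e1, e2]
      module
    rwa [hid2] at hmem

/-- Cutting corners: if `X` is a closed, connected, locally convex subset of a
topological vector space and `[x,y] ⊆ X`, `[y,z] ⊆ X`, then `[x,z] ⊆ X`. -/
theorem stmt_2 {V : Type*} [TopologicalSpace V] [AddCommGroup V] [Module ℝ V]
    [IsTopologicalAddGroup V] [ContinuousSMul ℝ V]
    {X : Set V} (hclosed : IsClosed X) (hconn : IsPreconnected X)
    (hlc : ∀ v ∈ X, ∃ N ∈ nhds v, Convex ℝ (N ∩ X))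
    {x y z : V} (hxy : segment ℝ x y ⊆ X) (hyz : segment ℝ y z ⊆ X) :
    segment ℝ x z ⊆ X := by
  classical
  set K : Set V := convexHull ℝ {x, y, z} with hKdef
  have hKconv : Convex ℝ K := convex_convexHull ℝ _
  have hKcpt : IsCompact K := (Set.toFinite ({x, y, z} : Set V)).isCompact_convexHull (𝕜 := ℝ)
  have hxK : x ∈ K := subset_convexHull ℝ _ (by simp)
  have hyK : y ∈ K := subset_convexHull ℝ _ (by simp)
  have hzK : z ∈ K := subset_convexHull ℝ _ (by simp)
  have hT : IsCompact (K ∩ X) := hKcpt.inter_right hclosed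
  -- choose data at each point of K ∩ X
  have hdata : ∀ v : V, v ∈ K ∩ X → ∃ U : Set V, IsOpen U ∧ (0:V) ∈ U ∧
      (∀ u ∈ U, -u ∈ U) ∧ ∃ Nv : Set V, Convex ℝ (Nv ∩ X) ∧
      ∀ a ∈ U, ∀ b ∈ U, v + a + b ∈ Nv := by
    intro v hv
    obtain ⟨Nv, hNv, hNvconv⟩ := hlc v hv.2
    have hpre : (fun u : V => v + u) ⁻¹' Nv ∈ nhds (0:V) := by
      apply ContinuousAt.preimage_mem_nhds (by fun_prop)
      simpa using hNv
    obtain ⟨U0, hU0open, hU00, hU0half⟩ := exists_open_nhds_zero_half hpre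
    refine ⟨U0 ∩ (-U0), hU0open.inter (hU0open.neg), ⟨hU00, by simpa using hU00⟩, ?_, Nv,
      hNvconv, ?_⟩
    · rintro u ⟨h1, h2⟩
      refine ⟨by simpa using h2, by simpa using h1⟩
    · intro a ha b hb
      have := hU0half a ha.1 b hb.1
      simpa [add_assoc] using this
  choose! U hUopen hU0 hUsymm Nv hNvconv hNvprop using hdata
  -- compact subcover
  have hcover : K ∩ X ⊆ ⋃ v ∈ K ∩ X, {w | w - v ∈ U v} := by
    intro v hv
    simp only [Set.mem_iUnion]
    exact ⟨v, hv, by simpa using hU0 v hv⟩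
  obtain ⟨s, hs⟩ := hT.elim_finite_subcover_image
    (fun v hv => (hUopen v hv).preimage (by fun_prop : Continuous (fun w : V => w - v)))
    hcover
  obtain ⟨hssub, hsfin, hscov⟩ := hs
  set W : Set V := (⋂ v ∈ s, U v) ∩ (⋂ v ∈ s, -(U v)) with hWdef
  have hWopen : IsOpen W := by
    apply IsOpen.inter
    · exact hsfin.isOpen_biInter (fun v hv => hUopen v (hssub hv))
    · exact hsfin.isOpen_biInter (fun v hv => (hUopen v (hssub hv)).neg)
  have hW0 : (0:V) ∈ W := by
    constructor
    · exact Set.mem_biInter (fun v hv => hU0 v (hssub hv))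
    · exact Set.mem_biInter (fun v hv => by simpa using hU0 v (hssub hv))
  have hstar : ∀ a ∈ K ∩ X, ∀ b ∈ K ∩ X, b - a ∈ W → segment ℝ a b ⊆ X := by
    intro a ha b hb hab
    have := hscov ha
    simp only [Set.mem_iUnion] at this
    obtain ⟨v, hvs, hav⟩ := this
    have hvKX : v ∈ K ∩ X := hssub hvs
    have hav' : a - v ∈ U v := hav
    have hbmem : b ∈ Nv v := by
      have h1 : b - a ∈ U v := Set.mem_iInter₂.mp hab.1 v hvs
      have := hNvprop v hvKX (a - v) hav' (b - a) h1
      have he : v + (a - v) + (b - a) = b := by abel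
      rwa [he] at this
    have hamem : a ∈ Nv v := by
      have := hNvprop v hvKX (a - v) hav' 0 (hU0 v hvKX)
      have he : v + (a - v) + 0 = a := by abel
      rwa [he] at this
    have hseg : segment ℝ a b ⊆ Nv v ∩ X :=
      (hNvconv v hvKX).segment_subset ⟨hamem, ha.2⟩ ⟨hbmem, hb.2⟩
    exact fun u hu => (hseg hu).2
  -- the square: uniform smallness parameter
  obtain ⟨ε, hεpos, hsquare⟩ : ∃ ε : ℝ, 0 < ε ∧ ∀ t₁ t₂ : ℝ, |t₁| ≤ ε → |t₂| ≤ ε →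
      t₁ • (z - y) + t₂ • (x - y) ∈ W := by
    have hcont : Continuous (fun s : ℝ × ℝ => s.1 • (z - y) + s.2 • (x - y)) := by fun_prop
    have hmem : (fun s : ℝ × ℝ => s.1 • (z - y) + s.2 • (x - y)) ⁻¹' W ∈ nhds ((0:ℝ), (0:ℝ)) := by
      apply ContinuousAt.preimage_mem_nhds hcont.continuousAt
      have : ((0:ℝ) • (z - y) + (0:ℝ) • (x - y)) = (0:V) := by module
      rw [this]
      exact hWopen.mem_nhds hW0
    rw [Metric.mem_nhds_iff] at hmem
    obtain ⟨δ, hδpos, hδsub⟩ := hmem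
    refine ⟨δ/2, by positivity, ?_⟩
    intro t₁ t₂ h1 h2
    have : ((t₁, t₂) : ℝ × ℝ) ∈ Metric.ball ((0:ℝ), (0:ℝ)) δ := by
      rw [Metric.mem_ball, Prod.dist_eq]
      simp only [Real.dist_eq, sub_zero]
      apply max_lt <;> [skip; skip] <;> linarith [abs_nonneg t₁, abs_nonneg t₂]
    exact hδsub this
  -- the marching corner points
  set M : ℕ := ⌈2 / ε⌉₊ + 1 with hM
  have hMpos : 0 < M := Nat.succ_pos _
  have hMR : (0:ℝ) < M := by positivity
  have hMε : 1 / (M:ℝ) ≤ ε / 2 := by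
    rw [div_le_div_iff₀ hMR (by norm_num : (0:ℝ) < 2)]
    have h2 := Nat.le_ceil (2 / ε)
    have h3 : 2 / ε ≤ (M:ℝ) := by
      have h4 : (⌈2 / ε⌉₊ : ℝ) ≤ (M:ℝ) := by simp only [hM]; push_cast; linarith
      linarith
    rw [div_le_iff₀ hεpos] at h3
    nlinarith
  have hCmem : ∀ k : ℕ, k ≤ M → y + ((k:ℝ)/(M:ℝ)) • (x - y) ∈ segment ℝ y x := by
    intro k hk
    rw [segment_eq_image]
    refine ⟨(k:ℝ)/(M:ℝ), ⟨by positivity, ?_⟩, by module⟩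
    rw [div_le_one hMR]; exact_mod_cast hk
  have hCX : ∀ k : ℕ, k ≤ M → y + ((k:ℝ)/(M:ℝ)) • (x - y) ∈ X := by
    intro k hk
    apply hxy
    rw [segment_symm]
    exact hCmem k hk
  have hCK : ∀ k : ℕ, k ≤ M → y + ((k:ℝ)/(M:ℝ)) • (x - y) ∈ K := by
    intro k hk
    have := hCmem k hk
    have hsub : segment ℝ y x ⊆ K := hKconv.segment_subset hyK hxK
    exact hsub this
  have main : ∀ k : ℕ, k ≤ M → segment ℝ (y + ((k:ℝ)/(M:ℝ)) • (x - y)) z ⊆ X := by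
    intro k
    induction k with
    | zero =>
      intro _
      have h00 : y + (((0:ℕ):ℝ)/(M:ℝ)) • (x - y) = y := by
        norm_num
      rw [h00]
      exact hyz
    | succ k ih =>
      intro hk1
      have hkM : k ≤ M := by omega
      have hqr := ih hkM
      set q : V := y + ((k:ℝ)/(M:ℝ)) • (x - y) with hq
      set p : V := y + (((k+1:ℕ):ℝ)/(M:ℝ)) • (x - y) with hp
      have hqp : segment ℝ q p ⊆ X := by
        have hsub : segment ℝ q p ⊆ segment ℝ y x :=
          (convex_segment y x).segment_subset (hCmem k hkM) (hCmem (k+1) hk1)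
        intro u hu
        apply hxy
        rw [segment_symm]
        exact hsub hu
      have hW' : ∀ t u : ℝ, |t| ≤ ε/2 → |u| ≤ 1 → t • (z - q) + u • (p - q) ∈ W := by
        intro t u ht hu
        have hid : t • (z - q) + u • (p - q)
            = t • (z - y) + (u * (((k+1:ℕ):ℝ)/(M:ℝ) - (k:ℝ)/(M:ℝ)) - t * ((k:ℝ)/(M:ℝ))) • (x - y) := by
          simp only [hq, hp]
          module
        rw [hid]
        apply hsquare
        · linarith
        · have hcast : (((k+1:ℕ):ℝ)/(M:ℝ) - (k:ℝ)/(M:ℝ)) = 1/(M:ℝ) := by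
            push_cast; ring
          rw [hcast]
          have hkM' : ((k:ℝ)/(M:ℝ)) ≤ 1 := by
            rw [div_le_one hMR]; exact_mod_cast hkM
          have hkM0 : (0:ℝ) ≤ (k:ℝ)/(M:ℝ) := by positivity
          have h1 : |u * (1/(M:ℝ)) - t * ((k:ℝ)/(M:ℝ))|
              ≤ |u * (1/(M:ℝ))| + |t * ((k:ℝ)/(M:ℝ))| := by
            rw [sub_eq_add_neg]
            calc |u * (1/(M:ℝ)) + -(t * ((k:ℝ)/(M:ℝ)))|
                ≤ |u * (1/(M:ℝ))| + |-(t * ((k:ℝ)/(M:ℝ)))| := abs_add_le _ _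
            _ = |u * (1/(M:ℝ))| + |t * ((k:ℝ)/(M:ℝ))| := by rw [abs_neg]
          have h2 : |u * (1/(M:ℝ))| ≤ 1/(M:ℝ) := by
            rw [abs_mul, abs_of_nonneg (by positivity : (0:ℝ) ≤ 1/(M:ℝ))]
            exact mul_le_of_le_one_left (by positivity) hu
          have h3 : |t * ((k:ℝ)/(M:ℝ))| ≤ ε/2 := by
            rw [abs_mul, abs_of_nonneg hkM0]
            calc |t| * ((k:ℝ)/(M:ℝ)) ≤ |t| * 1 :=
                  mul_le_mul_of_nonneg_left hkM' (abs_nonneg t)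
            _ = |t| := mul_one _
            _ ≤ ε/2 := ht
          linarith
      have hK' : ∀ h ξ : ℝ, 0 ≤ h → 0 ≤ ξ → h + ξ ≤ 1 →
          q + h • (z - q) + ξ • (p - q) ∈ K :=
        fun h ξ h0 ξ0 hs => comboK hKconv (hCK k hkM) (hCK (k+1) hk1) hzK h0 ξ0 hs
      have hfin := crux hclosed hstar hqp hqr (by positivity : (0:ℝ) < ε/2) hW' hK'
      exact hfin
  have hfinal := main M le_rfl
  have hid : y + ((M:ℝ)/(M:ℝ)) • (x - y) = x := by
    rw [div_self (ne_of_gt hMR)]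
    module
  rwa [hid] at hfinal
end

section
/- Let X be a Hausdorff topological space, V a locally convex topological vector space, and f : X → V a continuous map that has local convexity data. If f is open onto its image, then f(X) is a locally convex subset of V. -/
/-- A set `C ⊆ V` is a cone with vertex `v₀`. -/
def IsConeWithVertex {V : Type*} [AddCommGroup V] [Module ℝ V]
    (C : Set V) (v₀ : V) : Prop :=
  v₀ ∈ C ∧ ∀ v ∈ C, v ≠ v₀ → ∀ l : ℝ, 0 ≤ l → (1 - l) • v₀ + l • v ∈ C

/-- `f` has local convexity data: for each `x` and every sufficiently small open
neighborhood `U` of `x` there is a convex cone `C` with vertex `f x` such that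
(VN) `f(U) ⊆ C` is a neighborhood of `f x` in `C` (subspace topology), and
(SLO) `f|_U : U → C` is an open map and for every smaller neighborhood `U'` of
`x` the set `f(U')` is a neighborhood of `f x` in `C`. -/
def HasLocalConvexityData {X V : Type*} [TopologicalSpace X] [TopologicalSpace V]
    [AddCommGroup V] [Module ℝ V] (f : X → V) : Prop :=
  ∀ x : X, ∀ W ∈ nhds x, ∃ U ∈ nhds x, U ⊆ W ∧ IsOpen U ∧ ∃ C : Set V,
    Convex ℝ C ∧ IsConeWithVertex C (f x) ∧
    -- (VN)
    f '' U ⊆ C ∧ (∃ N ∈ nhds (f x), C ∩ N ⊆ f '' U) ∧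
    -- (SLO): openness of `f|_U` into `C` ...
    (∀ O : Set X, IsOpen O → O ⊆ U → ∀ y ∈ O, ∃ N ∈ nhds (f y), C ∩ N ⊆ f '' O) ∧
    -- ... and `f(U')` is a neighborhood of the vertex for every smaller `U'`
    (∀ U' ∈ nhds x, U' ⊆ U → ∃ N ∈ nhds (f x), C ∩ N ⊆ f '' U')

/-- `f` is open onto its image `f(X)` (with the subspace topology). -/
def OpenOntoImage {X V : Type*} [TopologicalSpace X] [TopologicalSpace V]
    (f : X → V) : Prop :=
  ∀ O : Set X, IsOpen O → ∃ W : Set V, IsOpen W ∧ f '' O = W ∩ Set.range f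

/-- A subset `S` of a topological vector space is locally convex if every point
of `S` has a neighborhood in `V` whose intersection with `S` is convex. -/
def IsLocallyConvexSet {V : Type*} [TopologicalSpace V] [AddCommGroup V]
    [Module ℝ V] (S : Set V) : Prop :=
  ∀ v ∈ S, ∃ N ∈ nhds v, Convex ℝ (N ∩ S)

/-- Let `X` be a Hausdorff space, `V` a locally convex topological vector space,
and `f : X → V` continuous with local convexity data. If `f` is open onto its
image then `f(X)` is a locally convex subset of `V`. -/
theorem stmt_6 {X V : Type*} [TopologicalSpace X] [T2Space X]
    [TopologicalSpace V] [AddCommGroup V] [Module ℝ V]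
    [IsTopologicalAddGroup V] [ContinuousSMul ℝ V] [LocallyConvexSpace ℝ V]
    {f : X → V} (hf : Continuous f) (hlcd : HasLocalConvexityData f)
    (hopen : OpenOntoImage f) :
    IsLocallyConvexSet (Set.range f) := by
  rintro v ⟨x, rfl⟩
  obtain ⟨U, hUx, -, hUopen, C, hCconv, -, hfUC, ⟨N, hN, hNC⟩, -, -⟩ :=
    hlcd x Set.univ Filter.univ_mem
  obtain ⟨W, hWopen, hW⟩ := hopen U hUopen
  have hfxU : f x ∈ f '' U := ⟨x, mem_of_mem_nhds hUx, rfl⟩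
  have hWnhds : W ∈ nhds (f x) := by
    have : f x ∈ W := (hW ▸ hfxU).1
    exact hWopen.mem_nhds this
  obtain ⟨M, ⟨hMnhds, hMconv⟩, hMsub⟩ :=
    ((LocallyConvexSpace.convex_basis (𝕜 := ℝ) (f x))).mem_iff.mp
      (Filter.inter_mem hN hWnhds)
  refine ⟨M, hMnhds, ?_⟩
  have key : M ∩ Set.range f = M ∩ C := by
    apply Set.Subset.antisymm
    · rintro y ⟨hyM, hyR⟩
      have hyW : y ∈ W := (hMsub hyM).2
      have : y ∈ f '' U := hW ▸ ⟨hyW, hyR⟩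
      exact ⟨hyM, hfUC this⟩
    · rintro y ⟨hyM, hyC⟩
      have : y ∈ f '' U := hNC ⟨hyC, (hMsub hyM).1⟩
      exact ⟨hyM, this.imp fun a ha => ha.2⟩
  rw [key]
  exact hMconv.inter hCconv
end

section
/- Let X be a connected Hausdorff topological space, V a locally convex topological vector space, and f : X → V continuous with local convexity data. If f is open onto its image and f(X) is closed in a convex subset C of V, then f(X) is convex. -/
open Set Filter Topology

set_option maxHeartbeats 1000000

section KleeA
variable {V : Type*} [AddCommGroup V] [Module ℝ V] [TopologicalSpace V]
    [IsTopologicalAddGroup V] [ContinuousSMul ℝ V] [LocallyConvexSpace ℝ V]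

lemma klee_extend {S : Set V}
    (hS : ∀ v ∈ S, ∃ N ∈ nhds v, Convex ℝ (S ∩ N))
    {a m b : V} (ham : segment ℝ a m ⊆ S) (hmb : segment ℝ m b ⊆ S) :
    ∃ δ : ℝ, 0 < δ ∧ ∀ ρ : ℝ, 0 ≤ ρ → ρ ≤ δ →
      segment ℝ a (m + ρ • (b - m)) ⊆ S := by
  classical
  set q : ℝ → V := fun s => a + s • (m - a) with hq_def
  have hq_mem : ∀ s : ℝ, 0 ≤ s → s ≤ 1 → q s ∈ S := by
    intro s h0 h1
    apply ham
    rw [segment_eq_image']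
    exact ⟨s, ⟨h0, h1⟩, rfl⟩
  have hqc : Continuous q := by
    simp only [hq_def]
    fun_prop
  have hdata : ∀ σ : Icc (0:ℝ) 1, ∃ NW : Set V × Set V,
      Convex ℝ (S ∩ NW.1) ∧ IsOpen NW.2 ∧ Convex ℝ NW.2 ∧ (0:V) ∈ NW.2 ∧
      ∀ w₁ ∈ NW.2, ∀ w₂ ∈ NW.2, q σ + w₁ + w₂ ∈ NW.1 := by
    rintro ⟨σ, hσ0, hσ1⟩
    obtain ⟨N, hN, hNc⟩ := hS _ (hq_mem σ hσ0 hσ1)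
    have hpre : (fun w : V => q σ + w) ⁻¹' N ∈ 𝓝 (0:V) := by
      apply ContinuousAt.preimage_mem_nhds (by fun_prop)
      simpa using hN
    obtain ⟨V₁, hV₁, hhalf⟩ := exists_nhds_zero_half hpre
    obtain ⟨W, ⟨hW0, hWop, hWcv⟩, hWsub⟩ :=
      (LocallyConvexSpace.convex_open_basis_zero ℝ V).mem_iff.1 hV₁
    refine ⟨(N, W), hNc, hWop, hWcv, hW0, ?_⟩
    intro w₁ hw₁ w₂ hw₂
    have := hhalf w₁ (hWsub hw₁) w₂ (hWsub hw₂)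
    simpa [add_assoc] using this
  choose NW hconv hWopen hWconv hW0 hkey using hdata
  set N : Icc (0:ℝ) 1 → Set V := fun σ => (NW σ).1 with hN_def
  set W : Icc (0:ℝ) 1 → Set V := fun σ => (NW σ).2 with hW_def
  set O : Icc (0:ℝ) 1 → Set ℝ := fun σ => (fun s => q s - q σ) ⁻¹' (W σ) with hO_def
  have hOopen : ∀ σ, IsOpen (O σ) := fun σ =>
    (hWopen σ).preimage (hqc.sub continuous_const)
  have hmemO : ∀ σ : Icc (0:ℝ) 1, (σ:ℝ) ∈ O σ := by
    intro σ; simp [hO_def, hW_def, hW0 σ]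
  obtain ⟨F, hF⟩ := isCompact_Icc.elim_finite_subcover O hOopen
    (fun s hs => mem_iUnion.2 ⟨⟨s, hs⟩, hmemO ⟨s, hs⟩⟩)
  obtain ⟨ℓ, hℓpos, hball⟩ := lebesgue_number_lemma_of_metric isCompact_Icc
    (fun i : F => hOopen i) (by
      intro s hs
      rcases mem_iUnion₂.1 (hF hs) with ⟨σ, hσF, hmem⟩
      exact mem_iUnion.2 ⟨⟨σ, hσF⟩, hmem⟩)
  set Wc : Set V := ⋂ i : F, W i with hWc_def
  have hWcopen : IsOpen Wc := isOpen_iInter_of_finite fun i => hWopen i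
  have hWcconv : Convex ℝ Wc := convex_iInter fun i => hWconv i
  have hWc0 : (0:V) ∈ Wc := mem_iInter.2 fun i => hW0 i
  have hsm : {ρ : ℝ | ρ • (b - m) ∈ Wc} ∈ 𝓝 (0:ℝ) := by
    apply ContinuousAt.preimage_mem_nhds (f := fun ρ : ℝ => ρ • (b - m)) (by fun_prop)
    simpa using hWcopen.mem_nhds hWc0
  obtain ⟨ε, hεpos, hε⟩ := Metric.mem_nhds_iff.1 hsm
  set Δ : ℝ := min (ε/2) 1 with hΔ_def
  have hΔpos : 0 < Δ := lt_min (by linarith) one_pos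
  have hΔ1 : Δ ≤ 1 := min_le_right _ _
  have hΔmem : Δ • (b - m) ∈ Wc := by
    apply hε
    simp only [Metric.mem_ball, Real.dist_eq, sub_zero]
    rw [abs_of_pos hΔpos]
    calc Δ ≤ ε/2 := min_le_left _ _
    _ < ε := by linarith
  have hWc_scale : ∀ τ : ℝ, 0 ≤ τ → τ ≤ Δ → τ • (b - m) ∈ Wc := by
    intro τ h0 h1
    have hmem := hWcconv.smul_mem_of_zero_mem hWc0 hΔmem
      (⟨div_nonneg h0 hΔpos.le, (div_le_one hΔpos).2 h1⟩ : τ/Δ ∈ Icc (0:ℝ) 1)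
    rwa [smul_smul, div_mul_cancel₀ _ hΔpos.ne'] at hmem
  -- choose the subdivision parameter
  obtain ⟨n₀, hn₀⟩ := exists_nat_one_div_lt hℓpos
  set nn : ℕ := n₀ + 1 with hnn_def
  set en : ℝ := (nn : ℝ) with hen_def
  have hen1 : (1:ℝ) ≤ en := by
    rw [hen_def, hnn_def]; exact_mod_cast Nat.succ_le_succ (Nat.zero_le n₀)
  have hen0 : (0:ℝ) < en := by linarith
  have hinv : 1 / en < ℓ := by
    rw [hen_def, hnn_def]; push_cast; exact hn₀
  set P : ℝ → ℝ → V := fun s ρ => a + s • (m - a) + (s * ρ) • (b - m) with hP_def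
  have key : ∀ k : ℕ, k ≤ nn → ∀ s : ℝ, 1 - (k:ℝ)/en ≤ s → s ≤ 1 →
      ∀ ρ : ℝ, 0 ≤ ρ → ρ ≤ Δ / en ^ k → P s ρ ∈ S := by
    intro k
    induction k with
    | zero =>
      intro _ s hs1 hs2 ρ hρ0 hρ1
      have hseq : s = 1 := le_antisymm hs2 (by simpa using hs1)
      subst hseq
      have hρΔ : ρ ≤ Δ := by simpa using hρ1
      have hmem : m + ρ • (b - m) ∈ S := by
        apply hmb; rw [segment_eq_image']; exact ⟨ρ, ⟨hρ0, hρΔ.trans hΔ1⟩, rfl⟩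
      have heq : P 1 ρ = m + ρ • (b - m) := by simp only [hP_def]; module
      rwa [heq]
    | succ k ih =>
      intro hk1 s hs1 hs2 ρ hρ0 hρ1
      have hk : k ≤ nn := Nat.le_of_succ_le hk1
      have hcast : ((k:ℝ)+1) ≤ en := by
        rw [hen_def]; exact_mod_cast hk1
      have hpow1 : (1:ℝ) ≤ en ^ k := one_le_pow₀ hen1
      have hpow1' : (1:ℝ) ≤ en ^ (k+1) := one_le_pow₀ hen1
      have hs1' : 1 - ((k:ℝ)+1)/en ≤ s := by push_cast at hs1; linarith
      by_cases hcase : 1 - (k:ℝ)/en ≤ s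
      · apply ih hk s hcase hs2 ρ hρ0
        calc ρ ≤ Δ / en ^ (k+1) := hρ1
          _ ≤ Δ / en ^ k :=
            div_le_div_of_nonneg_left hΔpos.le (by positivity)
              (pow_le_pow_right₀ hen1 (Nat.le_succ k))
      · push_neg at hcase
        obtain ⟨t, ht_def⟩ : ∃ t : ℝ, t = 1 - (k:ℝ)/en := ⟨_, rfl⟩
        have hslt : s < t := by rw [ht_def]; exact hcase
        have hkdiv : (0:ℝ) ≤ (k:ℝ)/en := by positivity
        have ht1 : t ≤ 1 := by rw [ht_def]; linarith
        have htlb : 1/en ≤ t := by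
          have h2 : 1/en + (k:ℝ)/en ≤ 1 := by
            rw [← add_div]
            exact (div_le_one hen0).2 (by linarith)
          rw [ht_def]; linarith
        have ht0 : 0 < t := lt_of_lt_of_le (by positivity) htlb
        have hs0 : 0 ≤ s := by
          have : ((k:ℝ)+1)/en ≤ 1 := (div_le_one hen0).2 hcast
          linarith
        rcases eq_or_lt_of_le hρ0 with hρeq | hρpos
        · have heq : P s 0 = q s := by simp [hP_def, hq_def]
          rw [← hρeq, heq]
          exact hq_mem s hs0 hs2
        · obtain ⟨lam, hlam_def⟩ : ∃ lam : ℝ, lam = s / (en * t) := ⟨_, rfl⟩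
          have hent : 0 < en * t := mul_pos hen0 ht0
          have hlam0 : 0 ≤ lam := hlam_def ▸ div_nonneg hs0 hent.le
          have hlam_le : lam ≤ 1/en := by
            rw [hlam_def, div_le_div_iff₀ hent hen0]
            linarith [mul_le_mul_of_nonneg_left hslt.le hen0.le]
          have hlamlt : lam < 1 := by
            rw [hlam_def, div_lt_one hent]
            linarith [mul_le_mul_of_nonneg_right hen1 ht0.le]
          have h1lam : 0 < 1 - lam := by linarith
          obtain ⟨s', hs'_def⟩ : ∃ s' : ℝ, s' = (s - lam * t) / (1 - lam) := ⟨_, rfl⟩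
          have hlamt : lam * t = s / en := by
            rw [hlam_def]; field_simp
          have hsen : s/en ≤ s := div_le_self hs0 hen1
          have hsen1 : s/en ≤ 1/en := by gcongr
          have hnum : 0 ≤ s - lam * t := by rw [hlamt]; linarith
          have hs'0 : 0 ≤ s' := hs'_def ▸ div_nonneg hnum h1lam.le
          have hs'le : s' ≤ s := by
            rw [hs'_def, div_le_iff₀ h1lam]
            have hx : s * lam ≤ s * (1/en) := mul_le_mul_of_nonneg_left hlam_le hs0
            rw [mul_one_div] at hx
            nlinarith [hx, hlamt]
          have hs'ge : s - 1/en ≤ s' := by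
            have h3 : s - lam * t ≤ s' := by
              rw [hs'_def, le_div_iff₀ h1lam]
              linarith [mul_nonneg hlam0 hnum]
            rw [hlamt] at h3
            linarith
          obtain ⟨ρ'', hρ''_def⟩ : ∃ r : ℝ, r = en * ρ := ⟨_, rfl⟩
          have hρ''0 : 0 ≤ ρ'' := by rw [hρ''_def]; positivity
          have hρ''le : ρ'' ≤ Δ / en ^ k := by
            rw [hρ''_def]
            have h4 : ρ ≤ Δ / en ^ (k+1) := hρ1
            rw [pow_succ] at h4
            calc en * ρ ≤ en * (Δ / (en ^ k * en)) := by gcongr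
              _ = Δ / en ^ k := by field_simp
          have hX₁S : q s' ∈ S := hq_mem s' hs'0 (hs'le.trans hs2)
          have hX₂S : P t ρ'' ∈ S :=
            ih hk t (le_of_eq ht_def.symm) ht1 ρ'' hρ''0 hρ''le
          obtain ⟨i, hi⟩ := hball s ⟨hs0, hs2⟩
          have hqs' : q s' - q i ∈ W i := by
            apply hi
            have habs : |s' - s| < ℓ := by
              rw [abs_lt]; constructor <;> [linarith; linarith]
            simpa [Metric.mem_ball, Real.dist_eq] using habs
          have hts : t - s ≤ 1/en := by
            have hdiff : ((k:ℝ)+1)/en - (k:ℝ)/en = 1/en := by ring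
            rw [ht_def]; linarith
          have hqt : q t - q i ∈ W i := by
            apply hi
            have habs : |t - s| < ℓ := by
              rw [abs_lt]; constructor <;> [linarith; linarith]
            simpa [Metric.mem_ball, Real.dist_eq] using habs
          obtain ⟨d, hd_def⟩ : ∃ d : V, d = (t * ρ'') • (b - m) := ⟨_, rfl⟩
          have hdWc : d ∈ Wc := by
            rw [hd_def]
            apply hWc_scale
            · exact mul_nonneg ht0.le hρ''0
            · have h5 : Δ / en ^ k ≤ Δ := div_le_self hΔpos.le hpow1
              linarith [mul_le_mul_of_nonneg_right ht1 hρ''0]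
          have hdW : d ∈ W i := mem_iInter.1 hdWc i
          have hX₁N : q s' ∈ N i := by
            have h6 := hkey i _ hqs' 0 (hW0 i)
            simpa using h6
          have hX₂N : P t ρ'' ∈ N i := by
            have h7 := hkey i _ hqt d hdW
            have heq : q ↑i + (q t - q ↑i) + d = P t ρ'' := by
              rw [hd_def]; simp only [hP_def, hq_def]; abel
            rwa [heq] at h7
          have hcomb := hconv i ⟨hX₁S, hX₁N⟩ ⟨hX₂S, hX₂N⟩
            (by linarith : (0:ℝ) ≤ 1 - lam) hlam0 (by ring)
          have h1 : (1 - lam) * s' + lam * t = s := by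
            rw [hs'_def]; field_simp; ring
          have h2 : lam * (t * ρ'') = s * ρ := by
            rw [hlam_def, hρ''_def]
            field_simp
          have hPeq : P s ρ = (1 - lam) • q s' + lam • P t ρ'' := by
            simp only [hP_def, hq_def]
            match_scalars <;> linarith [h1, h2]
          rw [hPeq]
          exact hcomb.1
  refine ⟨Δ / en ^ nn, by positivity, ?_⟩
  intro ρ hρ0 hρ1 x hx
  rw [segment_eq_image'] at hx
  obtain ⟨s, ⟨hs0, hs1⟩, rfl⟩ := hx
  have hnncast : ((nn:ℕ):ℝ)/en = 1 := by
    rw [hen_def]; field_simp; exact div_self hen0.ne'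
  have hfin := key nn le_rfl s (by rw [hnncast]; linarith) hs1 ρ hρ0 hρ1
  have heq : a + s • (m + ρ • (b - m) - a) = P s ρ := by
    simp only [hP_def]; module
  show a + s • (m + ρ • (b - m) - a) ∈ S
  rw [heq]; exact hfin



lemma klee_join {S T C : Set V} (hC : Convex ℝ C) (hSC : S ⊆ C)
    (hT : IsClosed T) (hTC : S = T ∩ C)
    (hS : ∀ v ∈ S, ∃ N ∈ nhds v, Convex ℝ (S ∩ N))
    {a m b : V} (ha : a ∈ S) (hm : m ∈ S) (hb : b ∈ S)
    (ham : segment ℝ a m ⊆ S) (hmb : segment ℝ m b ⊆ S) :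
    segment ℝ a b ⊆ S := by
  have htri : ∀ ρ ∈ Icc (0:ℝ) 1, ∀ s ∈ Icc (0:ℝ) 1,
      a + s • (m + ρ • (b - m) - a) ∈ C := by
    intro ρ hρ s hs
    have h1 : m + ρ • (b - m) ∈ C := by
      apply hC.segment_subset (hSC hm) (hSC hb)
      rw [segment_eq_image']
      exact ⟨ρ, hρ, rfl⟩
    have h2 : a + s • (m + ρ • (b - m) - a) ∈ segment ℝ a (m + ρ • (b - m)) := by
      rw [segment_eq_image']
      exact ⟨s, hs, rfl⟩
    exact hC.segment_subset (hSC ha) h1 h2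
  set R : Set ℝ := {ρ | ρ ∈ Icc (0:ℝ) 1 ∧
    ∀ s ∈ Icc (0:ℝ) 1, a + s • (m + ρ • (b - m) - a) ∈ T} with hR_def
  have hRseg : ∀ ρ ∈ R, segment ℝ a (m + ρ • (b - m)) ⊆ S := by
    intro ρ hρ x hx
    rw [segment_eq_image'] at hx
    obtain ⟨s, hs, rfl⟩ := hx
    rw [hTC]
    exact ⟨hρ.2 s hs, htri ρ hρ.1 s hs⟩
  have hR0 : (0:ℝ) ∈ R := by
    refine ⟨⟨le_refl 0, zero_le_one⟩, ?_⟩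
    intro s hs
    have hmem : a + s • (m + (0:ℝ) • (b - m) - a) ∈ S := by
      apply ham
      rw [segment_eq_image']
      exact ⟨s, hs, by simp⟩
    rw [hTC] at hmem
    exact hmem.1
  have hRclosed : IsClosed R := by
    have hEq : R = Icc (0:ℝ) 1 ∩
        ⋂ s ∈ Icc (0:ℝ) 1, (fun ρ : ℝ => a + s • (m + ρ • (b - m) - a)) ⁻¹' T := by
      ext ρ
      simp only [hR_def, mem_setOf_eq, mem_inter_iff, mem_iInter, mem_preimage]
    rw [hEq]
    exact isClosed_Icc.inter (isClosed_biInter fun s _ => hT.preimage (by fun_prop))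
  have hRbdd : BddAbove R := ⟨1, fun ρ hρ => hρ.1.2⟩
  have hRne : R.Nonempty := ⟨0, hR0⟩
  have hsupR : sSup R ∈ R := hRclosed.csSup_mem hRne hRbdd
  by_cases hend : sSup R = 1
  · have hres := hRseg _ hsupR
    rw [hend] at hres
    have : m + (1:ℝ) • (b - m) = b := by module
    rwa [this] at hres
  · exfalso
    have hlt : sSup R < 1 := lt_of_le_of_ne hsupR.1.2 hend
    have hge0 : 0 ≤ sSup R := hsupR.1.1
    obtain ⟨m', hm'_def⟩ : ∃ m' : V, m' = m + sSup R • (b - m) := ⟨_, rfl⟩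
    have ham' : segment ℝ a m' ⊆ S := by rw [hm'_def]; exact hRseg _ hsupR
    have hm'seg : m' ∈ segment ℝ m b := by
      rw [segment_eq_image']
      exact ⟨sSup R, ⟨hge0, hsupR.1.2⟩, hm'_def.symm⟩
    have hm'b : segment ℝ m' b ⊆ S := fun x hx => hmb
      ((convex_segment (𝕜 := ℝ) m b).segment_subset hm'seg (right_mem_segment ℝ m b) hx)
    obtain ⟨δ, hδpos, hδ⟩ := klee_extend hS ham' hm'b
    obtain ⟨τ, hτdef⟩ : ∃ τ : ℝ, τ = min δ 1 := ⟨_, rfl⟩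
    have hτpos : 0 < τ := hτdef ▸ lt_min hδpos one_pos
    have hτ1 : τ ≤ 1 := hτdef ▸ min_le_right _ _
    have hnew := hδ τ hτpos.le (hτdef ▸ min_le_left _ _)
    obtain ⟨ρ₁, hρ₁def⟩ : ∃ r : ℝ, r = sSup R + τ * (1 - sSup R) := ⟨_, rfl⟩
    have hrew : m' + τ • (b - m') = m + ρ₁ • (b - m) := by
      rw [hm'_def, hρ₁def]; module
    have hρ₁R : ρ₁ ∈ R := by
      refine ⟨⟨?_, ?_⟩, ?_⟩
      · rw [hρ₁def]; nlinarith
      · rw [hρ₁def]; nlinarith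
      · intro s hs
        have hx : a + s • (m + ρ₁ • (b - m) - a) ∈ S := by
          apply hnew
          rw [← hrew, segment_eq_image']
          exact ⟨s, hs, by rw [hrew]⟩
        rw [hTC] at hx
        exact hx.1
    have hle := le_csSup hRbdd hρ₁R
    rw [hρ₁def] at hle
    nlinarith

end KleeA

section Main

open Set Filter Topology

/-- Let `X` be a connected Hausdorff space, `V` a locally convex topological
vector space, and `f : X → V` continuous with local convexity data. If `f` is
open onto its image and `f(X)` is closed in a convex subset `C` of `V`, then
`f(X)` is convex. -/
theorem stmt_7 {X V : Type*} [TopologicalSpace X] [T2Space X] [ConnectedSpace X]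
    [TopologicalSpace V] [AddCommGroup V] [Module ℝ V]
    [IsTopologicalAddGroup V] [ContinuousSMul ℝ V] [LocallyConvexSpace ℝ V]
    {f : X → V} (hf : Continuous f) (hlcd : HasLocalConvexityData f)
    (hopen : OpenOntoImage f)
    {C : Set V} (hC : Convex ℝ C) (hsub : Set.range f ⊆ C)
    (hclosedinC : ∃ T : Set V, IsClosed T ∧ Set.range f = T ∩ C) :
    Convex ℝ (Set.range f) := by
  classical
  obtain ⟨T, hT, hTC⟩ := hclosedinC
  set S : Set V := Set.range f with hS_def
  have hS : ∀ v ∈ S, ∃ N ∈ nhds v, Convex ℝ (S ∩ N) := by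
    rintro v ⟨x, rfl⟩
    obtain ⟨U, hU, -, hUopen, Cx, hCxconv, -, hUsubC, ⟨N, hN, hNsub⟩, -, -⟩ :=
      hlcd x Set.univ Filter.univ_mem
    obtain ⟨W, hWopen, hWeq⟩ := hopen U hUopen
    have hxU : f x ∈ f '' U := ⟨x, mem_of_mem_nhds hU, rfl⟩
    have hxW : f x ∈ W := by rw [hWeq] at hxU; exact hxU.1
    have hM : N ∩ W ∈ nhds (f x) := Filter.inter_mem hN (hWopen.mem_nhds hxW)
    obtain ⟨M', ⟨hM'nhds, hM'conv⟩, hM'sub⟩ :=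
      (LocallyConvexSpace.convex_basis (𝕜 := ℝ) (f x)).mem_iff.1 hM
    refine ⟨M', hM'nhds, ?_⟩
    have heq : S ∩ M' = Cx ∩ M' := by
      apply Set.Subset.antisymm
      · rintro y ⟨hyS, hyM⟩
        have hyW : y ∈ W := (hM'sub hyM).2
        have hyU : y ∈ f '' U := by rw [hWeq]; exact ⟨hyW, hyS⟩
        exact ⟨hUsubC hyU, hyM⟩
      · rintro y ⟨hyC, hyM⟩
        have hyN : y ∈ N := (hM'sub hyM).1
        have hyU : y ∈ f '' U := hNsub ⟨hyC, hyN⟩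
        have hyS : y ∈ S := by
          rw [hWeq] at hyU; exact hyU.2
        exact ⟨hyS, hyM⟩
    rw [heq]
    exact hCxconv.inter hM'conv
  have hS2 := hS
  choose! Nv hNv hNvconv using hS2
  rw [convex_iff_segment_subset]
  intro p hp r hr
  set A : Set V := {v | v ∈ S ∧ segment ℝ p v ⊆ S} with hA_def
  have hjoin : ∀ u w y : V, u ∈ S → w ∈ S → y ∈ S → segment ℝ u w ⊆ S →
      segment ℝ w y ⊆ S → segment ℝ u y ⊆ S :=
    fun u w y hu hw hy h1 h2 => klee_join hC hsub hT hTC hS hu hw hy h1 h2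
  have hforward : ∀ v ∈ A, ∀ y ∈ S ∩ Nv v, y ∈ A := by
    intro v hv y hy
    refine ⟨hy.1, ?_⟩
    have hseg : segment ℝ v y ⊆ S := fun z hz =>
      ((hNvconv v hv.1).segment_subset ⟨hv.1, mem_of_mem_nhds (hNv v hv.1)⟩ hy hz).1
    exact hjoin p v y hp hv.1 hy.1 hv.2 hseg
  have hbackward : ∀ v ∈ S, v ∉ A → ∀ y ∈ S ∩ Nv v, y ∉ A := by
    intro v hv hvA y hy hyA
    apply hvA
    refine ⟨hv, ?_⟩
    have hseg : segment ℝ y v ⊆ S := fun z hz =>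
      ((hNvconv v hv).segment_subset hy ⟨hv, mem_of_mem_nhds (hNv v hv)⟩ hz).1
    exact hjoin p y v hp hyA.1 hv hyA.2 hseg
  have hconn : IsPreconnected S := (isConnected_range hf).isPreconnected
  set U1 : Set V := ⋃ v ∈ A, interior (Nv v) with hU1_def
  set U2 : Set V := ⋃ v ∈ S \ A, interior (Nv v) with hU2_def
  have hU1open : IsOpen U1 := isOpen_biUnion fun v _ => isOpen_interior
  have hU2open : IsOpen U2 := isOpen_biUnion fun v _ => isOpen_interior
  have hpA : p ∈ A := by
    refine ⟨hp, ?_⟩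
    rw [segment_same]
    exact Set.singleton_subset_iff.2 hp
  have hcov : S ⊆ U1 ∪ U2 := by
    intro v hv
    by_cases hvA : v ∈ A
    · exact Or.inl (Set.mem_biUnion hvA (mem_interior_iff_mem_nhds.2 (hNv v hv)))
    · exact Or.inr (Set.mem_biUnion ⟨hv, hvA⟩ (mem_interior_iff_mem_nhds.2 (hNv v hv)))
  have hdisj : S ∩ (U1 ∩ U2) = ∅ := by
    ext z
    simp only [Set.mem_inter_iff, Set.mem_empty_iff_false, iff_false]
    rintro ⟨hzS, hzU1, hzU2⟩
    rw [hU1_def] at hzU1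
    rw [hU2_def] at hzU2
    obtain ⟨v, hvA, hzv⟩ := Set.mem_iUnion₂.1 hzU1
    obtain ⟨w, hwSA, hzw⟩ := Set.mem_iUnion₂.1 hzU2
    have hz1 : z ∈ A := hforward v hvA z ⟨hzS, interior_subset hzv⟩
    exact hbackward w hwSA.1 hwSA.2 z ⟨hzS, interior_subset hzw⟩ hz1
  have hAall : ∀ v ∈ S, v ∈ A := by
    by_contra hcon
    push_neg at hcon
    obtain ⟨w, hwS, hwA⟩ := hcon
    have hne1 : (S ∩ U1).Nonempty :=
      ⟨p, hp, Set.mem_biUnion hpA (mem_interior_iff_mem_nhds.2 (hNv p hp))⟩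
    have hne2 : (S ∩ U2).Nonempty :=
      ⟨w, hwS, Set.mem_biUnion ⟨hwS, hwA⟩ (mem_interior_iff_mem_nhds.2 (hNv w hwS))⟩
    obtain ⟨z, hz⟩ := hconn U1 U2 hU1open hU2open hcov hne1 hne2
    rw [hdisj] at hz
    exact hz
  exact (hAall r hr).2

end Main
end

section
/- Let X be a connected, locally connected, Hausdorff space, V a locally convex topological vector space, and f : X → V a continuous map with local convexity data and connected fibers. If f is closed onto its image f(X), then f is open onto its image and f(X) is locally convex; if moreover f(X) is closed in V, then f(X) is convex. -/
/-- `A` satisfies the locally fiber connected condition (LFC): `A` does not meet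
two different connected components of any fiber of `f`. -/
def SatisfiesLFC {X V : Type*} [TopologicalSpace X] (f : X → V) (A : Set X) : Prop :=
  ∀ a ∈ A, ∀ b ∈ A, f a = f b → b ∈ connectedComponentIn (f ⁻¹' {f a}) a

/-- `f` is locally fiber connected: every point has arbitrarily small
neighborhoods satisfying (LFC). -/
def LocallyFiberConnected {X V : Type*} [TopologicalSpace X] (f : X → V) : Prop :=
  ∀ x : X, ∀ W ∈ nhds x, ∃ U ∈ nhds x, U ⊆ W ∧ SatisfiesLFC f U

/-- `f` is closed onto its image `f(X)` (with the subspace topology). -/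
def ClosedOntoImage {X V : Type*} [TopologicalSpace X] [TopologicalSpace V]
    (f : X → V) : Prop :=
  ∀ S : Set X, IsClosed S → ∃ T : Set V, IsClosed T ∧ f '' S = T ∩ Set.range f

set_option linter.unusedSectionVars false

section Machinery

variable {X V : Type*} [TopologicalSpace X] [TopologicalSpace V]
  [AddCommGroup V] [Module ℝ V]

/-- A single piece of local convexity data at `z`. -/
def LCDat (f : X → V) (z : X) (U : Set X) (C : Set V) : Prop :=
  U ∈ nhds z ∧ IsOpen U ∧ Convex ℝ C ∧ IsConeWithVertex C (f z) ∧
  f '' U ⊆ C ∧ (∃ N ∈ nhds (f z), C ∩ N ⊆ f '' U) ∧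
  (∀ O : Set X, IsOpen O → O ⊆ U → ∀ y ∈ O, ∃ N ∈ nhds (f y), C ∩ N ⊆ f '' O) ∧
  (∀ U' ∈ nhds z, U' ⊆ U → ∃ N ∈ nhds (f z), C ∩ N ⊆ f '' U')

lemma hlcd_dat {f : X → V} (hlcd : HasLocalConvexityData f) (z : X) {W : Set X}
    (hW : W ∈ nhds z) : ∃ U C, U ⊆ W ∧ LCDat f z U C := by
  obtain ⟨U, hU, hUW, hUo, C, h1, h2, h3, h4, h5, h6⟩ := hlcd z W hW
  exact ⟨U, C, hUW, hU, hUo, h1, h2, h3, h4, h5, h6⟩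

/-- Two sets have the same germ at `v`. -/
def GermEq (v : V) (C C' : Set V) : Prop := ∃ N ∈ nhds v, C ∩ N = C' ∩ N

lemma GermEq.refl (v : V) (C : Set V) : GermEq v C C := ⟨Set.univ, Filter.univ_mem, rfl⟩

lemma GermEq.symm {v : V} {C C' : Set V} (h : GermEq v C C') : GermEq v C' C := by
  obtain ⟨N, hN, hEq⟩ := h; exact ⟨N, hN, hEq.symm⟩

lemma GermEq.trans {v : V} {C C' C'' : Set V} (h : GermEq v C C') (h' : GermEq v C' C'') :
    GermEq v C C'' := by
  obtain ⟨N, hN, hEq⟩ := h; obtain ⟨N', hN', hEq'⟩ := h'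
  refine ⟨N ∩ N', Filter.inter_mem hN hN', ?_⟩
  ext p
  constructor
  · rintro ⟨hC, hN1, hN2⟩
    have : p ∈ C' ∩ N := hEq ▸ ⟨hC, hN1⟩
    have : p ∈ C'' ∩ N' := hEq' ▸ ⟨this.1, hN2⟩
    exact ⟨this.1, hN1, hN2⟩
  · rintro ⟨hC, hN1, hN2⟩
    have : p ∈ C' ∩ N' := hEq'.symm ▸ ⟨hC, hN2⟩
    have : p ∈ C ∩ N := hEq.symm ▸ ⟨this.1, hN1⟩
    exact ⟨this.1, hN1, hN2⟩

/-- Germs of local cones agree along a fiber, one step. -/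
lemma germ_step {f : X → V} {z z' : X} {U C U' C'} (h : LCDat f z U C)
    (h' : LCDat f z' U' C') (hz' : z' ∈ U) (hUU : U' ⊆ U) (hfz : f z' = f z) :
    GermEq (f z) C C' := by
  obtain ⟨hU, hUo, _, _, hImg, _, hSLO, _⟩ := h
  obtain ⟨hU', hU'o, _, _, hImg', ⟨N', hN', hVN'⟩, _, _⟩ := h'
  -- direction 1: C' ∩ N' ⊆ C
  have hd1 : C' ∩ N' ⊆ C := fun p hp => hImg (Set.image_mono (f := f) hUU (hVN' hp))
  -- direction 2: via SLO applied to U'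
  obtain ⟨N, hN, hVN⟩ := hSLO U' hU'o hUU z' (mem_of_mem_nhds hU')
  have hd2 : C ∩ N ⊆ C' := fun p hp => hImg' (hVN hp)
  have hN2 : N ∈ nhds (f z) := hfz ▸ hN
  have hN2' : N' ∈ nhds (f z) := hfz ▸ hN'
  refine ⟨N ∩ N', Filter.inter_mem hN2 hN2', ?_⟩
  ext p
  exact ⟨fun ⟨h1, h2, h3⟩ => ⟨hd2 ⟨h1, h2⟩, h2, h3⟩, fun ⟨h1, h2, h3⟩ => ⟨hd1 ⟨h1, h3⟩, h2, h3⟩⟩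

/-- MAIN LEMMA: near `f x`, the image of any neighborhood `O` of `x` contains
`range f` near `f x`, and `range f` agrees with a convex cone near `f x`. -/
lemma main_lemma {f : X → V} (hf : Continuous f) (hlcd : HasLocalConvexityData f)
    (hfib : ∀ v : V, IsPreconnected (f ⁻¹' {v})) (hclosed : ClosedOntoImage f)
    (x : X) (O : Set X) (hO : O ∈ nhds x) :
    ∃ C : Set V, Convex ℝ C ∧ IsConeWithVertex C (f x) ∧
      ∃ N ∈ nhds (f x), Set.range f ∩ N ⊆ f '' O ∧ Set.range f ∩ N = C ∩ N := by
  classical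
  obtain ⟨Ux, Cx, hUxO, hdx⟩ := hlcd_dat hlcd x hO
  set F := f ⁻¹' {f x} with hF
  have hfx : ∀ z ∈ F, f z = f x := fun z hz => hz
  -- the two open sets
  set u : Set X := {p | ∃ z U C, z ∈ F ∧ LCDat f z U C ∧ GermEq (f x) C Cx ∧ p ∈ U} with hu
  set v' : Set X := {p | ∃ z U C, z ∈ F ∧ LCDat f z U C ∧ ¬ GermEq (f x) C Cx ∧ p ∈ U}
    with hv'
  have huo : IsOpen u := by
    rw [isOpen_iff_mem_nhds]
    rintro p ⟨z, U, C, hzF, hd, hg, hpU⟩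
    exact Filter.mem_of_superset (hd.2.1.mem_nhds hpU) fun q hq => ⟨z, U, C, hzF, hd, hg, hq⟩
  have hv'o : IsOpen v' := by
    rw [isOpen_iff_mem_nhds]
    rintro p ⟨z, U, C, hzF, hd, hg, hpU⟩
    exact Filter.mem_of_superset (hd.2.1.mem_nhds hpU) fun q hq => ⟨z, U, C, hzF, hd, hg, hq⟩
  -- any datum at a point of F ∩ u has germ Cx
  have key : ∀ p ∈ F, p ∈ u → ∀ Up Cp, LCDat f p Up Cp → GermEq (f x) Cp Cx := by
    rintro p hpF ⟨z, U, C, hzF, hd, hg, hpU⟩ Up Cp hdp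
    have hfp : f p = f x := hpF
    have hfzz : f z = f x := hzF
    have hUp : U ∩ Up ∈ nhds p := Filter.inter_mem (hd.2.1.mem_nhds hpU) hdp.1
    obtain ⟨U'', C'', hsub, hd''⟩ := hlcd_dat hlcd p hUp
    have g1 : GermEq (f z) C C'' :=
      germ_step hd hd'' hpU (hsub.trans Set.inter_subset_left) (hfp.trans hfzz.symm)
    have g2 : GermEq (f p) Cp C'' :=
      germ_step hdp hd'' (mem_of_mem_nhds hdp.1) (hsub.trans Set.inter_subset_right) rfl
    rw [hfzz] at g1; rw [hfp] at g2
    exact (g2.trans g1.symm).trans hg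
  -- F ∩ (u ∩ v') = ∅
  have hdisj : F ∩ (u ∩ v') = ∅ := by
    rw [Set.eq_empty_iff_forall_notMem]
    rintro p ⟨hpF, hpu, zt, Ut, Ct, hztF, hdt, hgt, hpUt⟩
    have hUtp : Ut ∈ nhds p := hdt.2.1.mem_nhds hpUt
    obtain ⟨U₀, C₀, hsub₀, hd₀⟩ := hlcd_dat hlcd p hUtp
    have g0 : GermEq (f x) C₀ Cx := key p hpF hpu U₀ C₀ hd₀
    have g1 : GermEq (f zt) Ct C₀ := germ_step hdt hd₀ hpUt hsub₀ ((hfx p hpF).trans (hfx zt hztF).symm)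
    rw [hfx zt hztF] at g1
    exact hgt (g1.trans g0)
  -- F ⊆ u ∪ v'
  have hcover : F ⊆ u ∪ v' := by
    intro z hzF
    obtain ⟨U, C, _, hd⟩ := hlcd_dat hlcd z (Filter.univ_mem : Set.univ ∈ nhds z)
    by_cases hg : GermEq (f x) C Cx
    · exact Or.inl ⟨z, U, C, hzF, hd, hg, mem_of_mem_nhds hd.1⟩
    · exact Or.inr ⟨z, U, C, hzF, hd, hg, mem_of_mem_nhds hd.1⟩
  have hxu : x ∈ F ∩ u :=
    ⟨rfl, x, Ux, Cx, rfl, hdx, GermEq.refl _ _, mem_of_mem_nhds hdx.1⟩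
  -- F ∩ v' = ∅
  have hv'empty : F ∩ v' = ∅ := by
    by_contra h
    obtain ⟨p, hp⟩ := Set.nonempty_iff_ne_empty.2 h
    obtain ⟨q, hq⟩ := hfib (f x) u v' huo hv'o hcover ⟨x, hxu⟩ ⟨p, hp⟩
    rw [Set.eq_empty_iff_forall_notMem] at hdisj
    exact hdisj q hq
  -- every point of the fiber has a germ-Cx datum
  have hfiberdat : ∀ z ∈ F, ∃ U C, LCDat f z U C ∧ GermEq (f x) C Cx := by
    intro z hzF
    have hzu : z ∈ u := by
      rcases hcover hzF with h | h
      · exact h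
      · exact absurd (Set.eq_empty_iff_forall_notMem.1 hv'empty z ⟨hzF, h⟩) (fun hc => hc)
    obtain ⟨U, C, _, hd⟩ := hlcd_dat hlcd z (Filter.univ_mem : Set.univ ∈ nhds z)
    exact ⟨U, C, hd, key z hzF hzu U C hd⟩
  -- choose data along the fiber
  have hchoice : ∀ z : X, ∃ U C N, z ∈ F →
      LCDat f z U C ∧ N ∈ nhds (f x) ∧ C ∩ N = Cx ∩ N := by
    intro z
    by_cases hzF : z ∈ F
    · obtain ⟨U, C, hd, N, hN, hEq⟩ := hfiberdat z hzF
      exact ⟨U, C, N, fun _ => ⟨hd, hN, hEq⟩⟩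
    · exact ⟨Set.univ, Set.univ, Set.univ, fun h => absurd h hzF⟩
  choose Uz Cz Nz hz using hchoice
  -- the saturating open set
  set W₀ : Set X := Ux ∪ ⋃ z ∈ F, (Uz z ∩ f ⁻¹' interior (Nz z)) with hW₀
  have hW₀o : IsOpen W₀ := by
    refine hdx.2.1.union (isOpen_biUnion fun z hzF => ?_)
    exact ((hz z hzF).1.2.1).inter (isOpen_interior.preimage hf)
  have hFW₀ : F ⊆ W₀ := by
    intro z hzF
    refine Or.inr (Set.mem_biUnion hzF ⟨mem_of_mem_nhds (hz z hzF).1.1, ?_⟩)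
    have : f z = f x := hzF
    rw [Set.mem_preimage, this, mem_interior_iff_mem_nhds]
    exact (hz z hzF).2.1
  have himg : f '' W₀ ⊆ Cx := by
    rintro w ⟨p, hp, rfl⟩
    rcases hp with hp | hp
    · exact hdx.2.2.2.2.1 ⟨p, hp, rfl⟩
    · rw [Set.mem_iUnion₂] at hp
      obtain ⟨z, hzF, hpU, hpN⟩ := hp
      have h1 : f p ∈ Cz z := (hz z hzF).1.2.2.2.2.1 ⟨p, hpU, rfl⟩
      have h2 : f p ∈ Nz z := interior_subset hpN
      have h3 : f p ∈ Cx ∩ Nz z := by rw [← (hz z hzF).2.2]; exact ⟨h1, h2⟩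
      exact h3.1
  -- closedness argument
  obtain ⟨T, hTc, hTeq⟩ := hclosed W₀ᶜ hW₀o.isClosed_compl
  have hxT : f x ∉ T := by
    intro hxT
    have : f x ∈ f '' W₀ᶜ := hTeq ▸ ⟨hxT, x, rfl⟩
    obtain ⟨p, hpW, hpf⟩ := this
    exact hpW (hFW₀ (show p ∈ F from hpf))
  have hN₀ : Tᶜ ∈ nhds (f x) := hTc.isOpen_compl.mem_nhds hxT
  have hrange : Set.range f ∩ Tᶜ ⊆ f '' W₀ := by
    rintro w ⟨⟨p, rfl⟩, hw⟩
    by_cases hp : p ∈ W₀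
    · exact ⟨p, hp, rfl⟩
    · have : f p ∈ T ∩ Set.range f := by rw [← hTeq]; exact ⟨p, hp, rfl⟩
      exact absurd this.1 hw
  obtain ⟨N₁, hN₁, hVN₁⟩ := hdx.2.2.2.2.2.1
  refine ⟨Cx, hdx.2.2.1, hdx.2.2.2.1, Tᶜ ∩ N₁, Filter.inter_mem hN₀ hN₁, ?_, ?_⟩
  · rintro w ⟨hwr, hwT, hwN₁⟩
    have hwC : w ∈ Cx := himg (hrange ⟨hwr, hwT⟩)
    exact Set.image_mono (f := f) hUxO (hVN₁ ⟨hwC, hwN₁⟩)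
  · ext w
    constructor
    · rintro ⟨hwr, hwT, hwN₁⟩
      exact ⟨himg (hrange ⟨hwr, hwT⟩), hwT, hwN₁⟩
    · rintro ⟨hwC, hwT, hwN₁⟩
      obtain ⟨p, _, rfl⟩ := hVN₁ ⟨hwC, hwN₁⟩
      exact ⟨⟨p, rfl⟩, hwT, hwN₁⟩

end Machinery

section Tietze

variable {V : Type*} [AddCommGroup V] [Module ℝ V] [TopologicalSpace V]
  [IsTopologicalAddGroup V] [ContinuousSMul ℝ V]

/-- If a set `S` coincides with a cone `C` with vertex `p` near `p`, and `S`
contains a segment through `p`, then the endpoints of the segment are in `C`. -/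
lemma ray_mem {S C N : Set V} {a w p : V}
    (hseg : segment ℝ a w ⊆ S) (hp : p ∈ segment ℝ a w)
    (hC : IsConeWithVertex C p) (hN : N ∈ nhds p) (hSN : S ∩ N = C ∩ N) :
    a ∈ C := by
  rcases eq_or_ne a p with h | h
  · exact h ▸ hC.1
  -- find a small ε with the perturbed point in N
  have hcont : ContinuousAt (fun ε : ℝ => p + ε • (a - p)) 0 := by fun_prop
  have hpre : (fun ε : ℝ => p + ε • (a - p)) ⁻¹' N ∈ nhds (0 : ℝ) := by
    refine hcont.preimage_mem_nhds ?_
    simpa using hN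
  obtain ⟨δ, hδ, hball⟩ := Metric.mem_nhds_iff.1 hpre
  set ε : ℝ := min (δ / 2) 1 with hε
  have hε0 : 0 < ε := lt_min (by linarith) one_pos
  have hε1 : ε ≤ 1 := min_le_right _ _
  have hεδ : ε < δ := lt_of_le_of_lt (min_le_left _ _) (by linarith)
  set u : V := p + ε • (a - p) with hu
  have huN : u ∈ N := by
    apply hball
    rw [Metric.mem_ball, Real.dist_eq, sub_zero, abs_of_pos hε0]
    exact hεδ
  have huseg : u ∈ segment ℝ a w := by
    have : u = ε • a + (1 - ε) • p := by rw [hu]; module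
    rw [this]
    exact (convex_segment a w) (left_mem_segment ℝ a w) hp (le_of_lt hε0)
      (by linarith) (by ring)
  have huC : u ∈ C := by
    have : u ∈ C ∩ N := hSN ▸ (⟨hseg huseg, huN⟩ : u ∈ S ∩ N)
    exact this.1
  have hune : u ≠ p := by
    rw [hu]
    intro hcon
    have : ε • (a - p) = 0 := by
      have := congrArg (fun q => q - p) hcon
      simpa using this
    rcases smul_eq_zero.1 this with h1 | h1
    · exact hε0.ne' h1
    · exact h (sub_eq_zero.1 h1)
  have := hC.2 u huC hune ε⁻¹ (le_of_lt (inv_pos.2 hε0))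
  have heq : (1 - ε⁻¹) • p + ε⁻¹ • u = a := by
    rw [hu, smul_add, smul_smul, inv_mul_cancel₀ hε0.ne']
    module
  rwa [heq] at this

lemma tietze_nakajima [LocallyConvexSpace ℝ V] {S : Set V} (hS : IsClosed S)
    (hconn : IsPreconnected S)
    (hloc : ∀ p ∈ S, ∃ C N, Convex ℝ C ∧ IsConeWithVertex C p ∧ N ∈ nhds p ∧
      S ∩ N = C ∩ N) :
    Convex ℝ S := by
  classical
  -- it suffices to show all segments between points of S lie in S
  suffices hkey : ∀ a ∈ S, ∀ w ∈ S, ∀ t : ℝ, 0 ≤ t → t ≤ 1 → a + t • (w - a) ∈ S by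
    intro x hx y hy s t hs ht hst
    have := hkey x hx y hy t ht (by linarith)
    have heq : x + t • (y - x) = s • x + t • y := by
      have h1 : s = 1 - t := by linarith
      rw [h1]; module
    rwa [heq] at this
  intro a ha
  -- the set of good endpoints
  set B : Set V := {w | ∀ t : ℝ, 0 ≤ t → t ≤ 1 → a + t • (w - a) ∈ S} with hB
  -- the chain argument: openness of B within S
  have hopen : ∀ w ∈ S ∩ B, ∃ M : Set V, IsOpen M ∧ w ∈ M ∧ S ∩ M ⊆ B := by
    rintro w ⟨hwS, hwB⟩
    set K : Set V := segment ℝ a w with hK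
    have hKS : K ⊆ S := by
      intro q hq
      rw [hK, segment_eq_image'] at hq
      obtain ⟨t, ⟨ht0, ht1⟩, rfl⟩ := hq
      exact hwB t ht0 ht1
    have hKcp : IsCompact K := by
      rw [hK, segment_eq_image']
      exact isCompact_Icc.image (by fun_prop)
    -- choose local data along K
    have hdata : ∀ q : V, ∃ C N, q ∈ K → (Convex ℝ C ∧ IsConeWithVertex C q ∧
        N ∈ nhds q ∧ S ∩ N = C ∩ N) := by
      intro q
      by_cases hq : q ∈ K
      · obtain ⟨C, N, h⟩ := hloc q (hKS hq)
        exact ⟨C, N, fun _ => h⟩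
      · exact ⟨∅, ∅, fun h => absurd h hq⟩
    choose Cq Nq hq using hdata
    -- shrink to additive neighborhoods of 0
    have hOmq : ∀ q : V, ∃ Z : Set V, q ∈ K → (IsOpen Z ∧ Convex ℝ Z ∧ (0 : V) ∈ Z ∧
        ∀ b₁ ∈ Z, ∀ b₂ ∈ Z, ∀ b₃ ∈ Z, q + (b₁ + b₂ + b₃) ∈ Nq q) := by
      intro q
      by_cases hqK : q ∈ K
      · have hNq : Nq q ∈ nhds q := (hq q hqK).2.2.1
        have hM : (fun y : V => q + y) ⁻¹' Nq q ∈ nhds (0 : V) := by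
          refine (Continuous.continuousAt (by fun_prop)).preimage_mem_nhds ?_
          simpa using hNq
        obtain ⟨A, hA, hAadd⟩ := exists_nhds_zero_half hM
        obtain ⟨Bz, hBz, hBadd⟩ := exists_nhds_zero_half hA
        have hDex : ∃ D, D ∈ nhds (0 : V) ∧ Convex ℝ D ∧ D ⊆ Bz := by
          have := (LocallyConvexSpace.convex_basis (𝕜 := ℝ) (0 : V)).mem_iff.mp hBz
          obtain ⟨D, ⟨h1, h2⟩, h3⟩ := this
          exact ⟨D, h1, h2, h3⟩
        obtain ⟨D, hD, hDconv, hDB⟩ := hDex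
        refine ⟨interior D, fun _ => ⟨isOpen_interior, hDconv.interior,
          mem_interior_iff_mem_nhds.2 hD, ?_⟩⟩
        intro b₁ hb₁ b₂ hb₂ b₃ hb₃
        have hBsub : interior D ⊆ Bz := (interior_subset.trans hDB)
        have h0B : (0 : V) ∈ Bz := mem_of_mem_nhds hBz
        have h12 : b₁ + b₂ ∈ A := hBadd b₁ (hBsub hb₁) b₂ (hBsub hb₂)
        have h3A : b₃ ∈ A := by
          have := hBadd b₃ (hBsub hb₃) 0 h0B
          rwa [add_zero] at this
        have := hAadd (b₁ + b₂) h12 b₃ h3A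
        exact this
      · exact ⟨∅, fun h => absurd h hqK⟩
    choose Zq hZq using hOmq
    -- compactness: finitely many translates cover K
    have hcover : ∀ q ∈ K, {p | p - q ∈ Zq q} ∈ nhds q := by
      intro q hqK
      have : IsOpen {p : V | p - q ∈ Zq q} := (hZq q hqK).1.preimage (by fun_prop)
      exact this.mem_nhds (by simp [(hZq q hqK).2.2.1])
    obtain ⟨t, htK, htcov⟩ := hKcp.elim_nhds_subcover (fun q => {p | p - q ∈ Zq q}) hcover
    set Ω : Set V := ⋂ q ∈ t, Zq q with hΩ
    have hΩo : IsOpen Ω := isOpen_biInter_finset fun q hqt => (hZq q (htK q hqt)).1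
    have hΩc : Convex ℝ Ω := convex_iInter₂ fun q hqt => (hZq q (htK q hqt)).2.1
    have hΩ0 : (0 : V) ∈ Ω := Set.mem_iInter₂.2 fun q hqt => (hZq q (htK q hqt)).2.2.1
    -- the uniform covering property
    have hunif : ∀ q ∈ K, ∃ p ∈ K, ∀ y ∈ Ω, ∀ z ∈ Ω, q + (y + z) ∈ Nq p := by
      intro q hqK
      obtain ⟨p, hpt, hqp⟩ := Set.mem_iUnion₂.1 (htcov hqK)
      have hpK : p ∈ K := htK p hpt
      refine ⟨p, hpK, fun y hy z hz => ?_⟩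
      have hyZ : y ∈ Zq p := Set.mem_iInter₂.1 hy p hpt
      have hzZ : z ∈ Zq p := Set.mem_iInter₂.1 hz p hpt
      have := (hZq p hpK).2.2.2 (q - p) hqp y hyZ z hzZ
      have heq : p + (q - p + y + z) = q + (y + z) := by abel
      rwa [heq] at this
    -- choose n with (w - a)/n ∈ Ω
    have hex : ∃ n : ℕ, 1 ≤ n ∧ ((n : ℝ))⁻¹ • (w - a) ∈ Ω := by
      have h0 : Filter.Tendsto (fun n : ℕ => ((n : ℝ))⁻¹) Filter.atTop (nhds 0) := by
        simpa [one_div] using (tendsto_one_div_atTop_nhds_zero_nat :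
          Filter.Tendsto (fun n : ℕ => 1 / (n : ℝ)) Filter.atTop (nhds 0))
      have h1 := h0.smul_const (w - a)
      rw [zero_smul] at h1
      have h2 := h1.eventually_mem (hΩo.mem_nhds hΩ0)
      obtain ⟨n, hn1, hn2⟩ := (h2.and (Filter.eventually_ge_atTop 1)).exists
      exact ⟨n, hn2, hn1⟩
    obtain ⟨n, hn1, hnΩ⟩ := hex
    have hn0 : (0 : ℝ) < n := by exact_mod_cast hn1
    -- the candidate open set
    refine ⟨{p | p - w ∈ Ω}, hΩo.preimage (by fun_prop), by simp [hΩ0], ?_⟩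
    rintro w' ⟨hw'S, hw'M⟩
    have hw'Ω : w' - w ∈ Ω := hw'M
    -- downward induction
    have hSeg : ∀ k : ℕ, k ≤ n → ∀ t : ℝ, ((n - k : ℕ) : ℝ) / n ≤ t → t ≤ 1 →
        a + t • (w' - a) ∈ S := by
      intro k
      induction k with
      | zero =>
        intro _ t ht0 ht1
        have : (1 : ℝ) ≤ t := by
          rw [Nat.sub_zero] at ht0
          calc (1 : ℝ) = (n : ℝ) / n := by field_simp
          _ ≤ t := ht0
        have ht : t = 1 := le_antisymm ht1 this
        rw [ht, one_smul]
        have : a + (w' - a) = w' := by abel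
        rwa [this]
      | succ k ih =>
        intro hk t ht0 ht1
        have hkn : k ≤ n := le_of_lt (Nat.lt_of_succ_le hk)
        set j : ℕ := n - (k + 1) with hj
        have hj1 : j + 1 = n - k := by omega
        have hjn : j < n := by omega
        by_cases hcase : ((j : ℝ) + 1) / n ≤ t
        · refine ih hkn t ?_ ht1
          rw [← hj1]
          push_cast
          exact hcase
        push_neg at hcase
        -- q is the corresponding point on the UNPERTURBED segment
        set q : V := a + ((j : ℝ) / n) • (w - a) with hq'
        have hqK : q ∈ K := by
          rw [hK, segment_eq_image']
          refine ⟨(j : ℝ) / n, ⟨by positivity, ?_⟩, rfl⟩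
          rw [div_le_one hn0]
          exact_mod_cast le_of_lt hjn
        obtain ⟨p, hpK, hp⟩ := hunif q hqK
        obtain ⟨hCc, hCcone, hNn, hSN⟩ := hq p hpK
        -- a ∈ Cq p by the ray lemma
        have haC : a ∈ Cq p := ray_mem hKS hpK hCcone hNn hSN
        -- membership of perturbed points in Nq p
        have hmem : ∀ s : ℝ, (j : ℝ) / n ≤ s → s ≤ ((j : ℝ) + 1) / n →
            a + s • (w' - a) ∈ Nq p := by
          intro s hs0 hs1
          have hs00 : 0 ≤ s := le_trans (by positivity) hs0
          have hs11 : s ≤ 1 := by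
            refine le_trans hs1 ?_
            rw [div_le_one hn0]
            exact_mod_cast hjn
          set y : V := s • (w' - w) with hy
          set z : V := (s - (j : ℝ) / n) • (w - a) with hz
          have hyΩ : y ∈ Ω := by
            have := hΩc hΩ0 hw'Ω (by linarith : (0:ℝ) ≤ 1 - s) hs00 (by ring)
            simpa [hy] using this
          have hzΩ : z ∈ Ω := by
            set μ : ℝ := (s - (j : ℝ) / n) * n with hμ
            have hμ0 : 0 ≤ μ := by
              apply mul_nonneg _ (le_of_lt hn0)
              linarith
            have hμ1 : μ ≤ 1 := by
              have h2 : s * n ≤ (j : ℝ) + 1 := (le_div_iff₀ hn0).1 hs1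
              have h3 : (j : ℝ) / n * n = (j : ℝ) := by field_simp
              rw [hμ]
              calc (s - (j:ℝ)/n) * n = s * n - (j:ℝ)/n * n := by ring
              _ = s * n - (j : ℝ) := by rw [h3]
              _ ≤ 1 := by linarith
            have hzeq : z = μ • (((n : ℝ))⁻¹ • (w - a)) := by
              rw [hz, smul_smul, hμ]
              congr 1
              field_simp
            rw [hzeq]
            have := hΩc hnΩ hΩ0 hμ0 (by linarith : (0:ℝ) ≤ 1 - μ) (by ring)
            simpa using this
          have := hp y hyΩ z hzΩ
          have heq : q + (y + z) = a + s • (w' - a) := by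
            rw [hq', hy, hz]
            module
          rwa [heq] at this
        -- the next division point is in S by induction hypothesis
        set x₁ : V := a + (((j : ℝ) + 1) / n) • (w' - a) with hx₁
        have hx₁S : x₁ ∈ S := by
          refine ih hkn _ ?_ ?_
          · rw [← hj1]; push_cast; exact le_rfl
          · rw [div_le_one hn0]
            have : (j : ℝ) + 1 ≤ (n : ℝ) := by exact_mod_cast hjn
            linarith
        have hx₁C : x₁ ∈ Cq p := by
          have hx₁N : x₁ ∈ Nq p := hmem _ (by gcongr; linarith) le_rfl
          have : x₁ ∈ Cq p ∩ Nq p := hSN ▸ (⟨hx₁S, hx₁N⟩ : x₁ ∈ S ∩ Nq p)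
          exact this.1
        -- the target point is a convex combination of a and x₁
        set μ : ℝ := t * n / ((j : ℝ) + 1) with hμ
        have hj10 : (0 : ℝ) < (j : ℝ) + 1 := by positivity
        have hμ0 : 0 ≤ μ := by
          apply div_nonneg _ (le_of_lt hj10)
          have : (0:ℝ) ≤ t := le_trans (by positivity) ht0
          positivity
        have hμ1 : μ ≤ 1 := by
          have h2 : t * n < (j : ℝ) + 1 := (lt_div_iff₀ hn0).1 hcase
          rw [hμ, div_le_one hj10]
          linarith
        have hcomb : (1 - μ) • a + μ • x₁ = a + t • (w' - a) := by
          rw [hx₁, hμ, smul_add, smul_smul]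
          have : t * n / ((j : ℝ) + 1) * (((j : ℝ) + 1) / n) = t := by
            field_simp
          rw [this]
          module
        have htgtC : a + t • (w' - a) ∈ Cq p := by
          rw [← hcomb]
          exact hCc haC hx₁C (by linarith) hμ0 (by ring)
        have htgtN : a + t • (w' - a) ∈ Nq p := hmem t ht0 (le_of_lt hcase)
        have : a + t • (w' - a) ∈ S ∩ Nq p := by
          rw [hSN]; exact ⟨htgtC, htgtN⟩
        exact this.1
    -- conclude: w' ∈ B
    intro s hs0 hs1
    have h0 : ((n - n : ℕ) : ℝ) / n ≤ s := by
      simp only [Nat.sub_self, Nat.cast_zero, zero_div]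
      exact hs0
    exact hSeg n le_rfl s h0 hs1
  -- B is closed
  have hBc : IsClosed B := by
    have hBeq : B = ⋂ t ∈ Set.Icc (0:ℝ) 1, (fun w => a + t • (w - a)) ⁻¹' S := by
      ext w
      constructor
      · intro hwB
        exact Set.mem_iInter₂.2 fun t ht => hwB t ht.1 ht.2
      · intro hw t ht0 ht1
        exact Set.mem_iInter₂.1 hw t ⟨ht0, ht1⟩
    rw [hBeq]
    exact isClosed_biInter fun t ht => IsClosed.preimage (by fun_prop) hS
  -- a itself is a good endpoint
  have haB : a ∈ B := by
    intro t ht0 ht1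
    have : a + t • (a - a) = a := by rw [sub_self, smul_zero, add_zero]
    rwa [this]
  -- preconnectedness: S ⊆ B
  have hSB : S ⊆ B := by
    set u : Set V := ⋃₀ {M | IsOpen M ∧ S ∩ M ⊆ B} with hu
    have huo : IsOpen u := isOpen_sUnion fun M hM => hM.1
    have hSuB : S ∩ u ⊆ B := by
      rintro p ⟨hpS, M, ⟨hMo, hMB⟩, hpM⟩
      exact hMB ⟨hpS, hpM⟩
    have hcl : S ⊆ u ∪ Bᶜ := by
      intro p hpS
      by_cases hpB : p ∈ B
      · obtain ⟨M, hMo, hpM, hMB⟩ := hopen p ⟨hpS, hpB⟩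
        exact Or.inl ⟨M, ⟨hMo, hMB⟩, hpM⟩
      · exact Or.inr hpB
    have hne : (S ∩ u).Nonempty := by
      obtain ⟨M, hMo, haM, hMB⟩ := hopen a ⟨ha, haB⟩
      exact ⟨a, ha, M, ⟨hMo, hMB⟩, haM⟩
    rcases (S ∩ Bᶜ).eq_empty_or_nonempty with he | hne2
    · intro p hpS
      by_contra hpB
      exact absurd he (Set.nonempty_iff_ne_empty.1 ⟨p, hpS, hpB⟩)
    · obtain ⟨q, hqS, hqu, hqBc⟩ := hconn u Bᶜ huo hBc.isOpen_compl hcl hne hne2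
      exact absurd (hSuB ⟨hqS, hqu⟩) hqBc
  intro w hw t ht0 ht1
  exact hSB hw t ht0 ht1

end Tietze

/-- Let `X` be a connected, locally connected Hausdorff space, `V` a locally
convex topological vector space, and `f : X → V` continuous with local convexity
data, locally fiber connected, and with connected fibers. If `f` is closed onto
its image, then `f` is open onto its image and `f(X)` is locally convex; if
moreover `f(X)` is closed in `V`, then `f(X)` is convex. -/
theorem stmt_9 {X V : Type*} [TopologicalSpace X] [T2Space X] [ConnectedSpace X]
    [LocallyConnectedSpace X]
    [TopologicalSpace V] [AddCommGroup V] [Module ℝ V]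
    [IsTopologicalAddGroup V] [ContinuousSMul ℝ V] [LocallyConvexSpace ℝ V]
    {f : X → V} (hf : Continuous f) (hlcd : HasLocalConvexityData f)
    (hlfc : LocallyFiberConnected f)
    (hfib : ∀ v : V, IsPreconnected (f ⁻¹' {v}))
    (hclosed : ClosedOntoImage f) :
    OpenOntoImage f ∧ IsLocallyConvexSet (Set.range f) ∧
      (IsClosed (Set.range f) → Convex ℝ (Set.range f)) := by
  classical
  refine ⟨?_, ?_, ?_⟩
  · -- openness onto the image
    intro O hO
    have h : ∀ y : X, ∃ N : Set V, y ∈ O → (N ∈ nhds (f y) ∧ Set.range f ∩ N ⊆ f '' O) := by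
      intro y
      by_cases hy : y ∈ O
      · obtain ⟨C, _, _, N, hN, hsub, _⟩ :=
          main_lemma hf hlcd hfib hclosed y O (hO.mem_nhds hy)
        exact ⟨N, fun _ => ⟨hN, hsub⟩⟩
      · exact ⟨Set.univ, fun h => absurd h hy⟩
    choose Nf hNf using h
    refine ⟨⋃ y ∈ O, interior (Nf y), isOpen_biUnion fun y _ => isOpen_interior, ?_⟩
    ext w
    constructor
    · rintro ⟨y, hyO, rfl⟩
      refine ⟨Set.mem_biUnion hyO ?_, y, rfl⟩
      exact mem_interior_iff_mem_nhds.2 (hNf y hyO).1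
    · rintro ⟨hw, hwr⟩
      obtain ⟨y, hyO, hwint⟩ := Set.mem_iUnion₂.1 hw
      exact (hNf y hyO).2 ⟨hwr, interior_subset hwint⟩
  · -- local convexity of the image
    rintro v ⟨x, rfl⟩
    obtain ⟨C, hCc, _, N, hN, _, hEq⟩ :=
      main_lemma hf hlcd hfib hclosed x Set.univ Filter.univ_mem
    have hDex : ∃ D, D ∈ nhds (f x) ∧ Convex ℝ D ∧ D ⊆ N := by
      have := (LocallyConvexSpace.convex_basis (𝕜 := ℝ) (f x)).mem_iff.mp hN
      obtain ⟨D, ⟨h1, h2⟩, h3⟩ := this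
      exact ⟨D, h1, h2, h3⟩
    obtain ⟨D, hD, hDconv, hDN⟩ := hDex
    refine ⟨D, hD, ?_⟩
    have hDr : D ∩ Set.range f = D ∩ C := by
      ext w
      constructor
      · rintro ⟨hwD, hwr⟩
        have : w ∈ C ∩ N := hEq ▸ (⟨hwr, hDN hwD⟩ : w ∈ Set.range f ∩ N)
        exact ⟨hwD, this.1⟩
      · rintro ⟨hwD, hwC⟩
        have : w ∈ Set.range f ∩ N := by rw [hEq]; exact ⟨hwC, hDN hwD⟩
        exact ⟨hwD, this.1⟩
    rw [hDr]
    exact hDconv.inter hCc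
  · -- convexity of a closed image
    intro hcl
    refine tietze_nakajima hcl (isPreconnected_range hf) ?_
    rintro p ⟨x, rfl⟩
    obtain ⟨C, hCc, hCcone, N, hN, _, hEq⟩ :=
      main_lemma hf hlcd hfib hclosed x Set.univ Filter.univ_mem
    exact ⟨C, N, hCc, hCcone, hN, hEq⟩
end
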